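/- arXiv:1506.03549 — 13 statements merged into one kernel-verified Lean document; each statement's English description precedes it below -/
import Mathlib

section
/- Let F : B1 → B2 be a continuously differentiable map between Banach spaces whose derivative is uniformly stable with constants A, B > 0, and suppose α_F := sup_{‖y‖=1} inf_{‖z‖=1} sup_{x∈B1} ‖F'(x)y/‖F'(x)y‖ − z‖ < 1. Then F is bi-Lipschitz; more precisely, (1−α_F)·A·‖y‖ ≤ ‖F(x+y)−F(x)‖ ≤ B‖y‖ for all x, y ∈ B1. -/
/-- If `F` is continuously differentiable between Banach spaces with uniformly
stable derivative (constants `A, B > 0`) and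
`α_F := sup_{‖y‖=1} inf_{‖z‖=1} sup_{x} ‖F'(x)y/‖F'(x)y‖ − z‖ < 1`, then `F` is bi-Lipschitz:
`(1−α_F)·A·‖y‖ ≤ ‖F(x+y)−F(x)‖ ≤ B‖y‖` for all `x, y`. -/
theorem bilipschitz_of_alphaF_lt_one
    {B1 B2 : Type*} [NormedAddCommGroup B1] [NormedSpace ℝ B1] [CompleteSpace B1]
    [NormedAddCommGroup B2] [NormedSpace ℝ B2] [CompleteSpace B2]
    (F : B1 → B2) (F' : B1 → B1 →L[ℝ] B2)
    (hF : ∀ x : B1, HasFDerivAt F (F' x) x)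
    (hF'cont : Continuous F')
    (A B : ℝ) (hA : 0 < A) (hB : 0 < B)
    (hstab : ∀ x y : B1, A * ‖y‖ ≤ ‖F' x y‖ ∧ ‖F' x y‖ ≤ B * ‖y‖)
    (αF : ℝ)
    (hαdef : αF = ⨆ y : {y : B1 // ‖y‖ = 1}, ⨅ z : {z : B2 // ‖z‖ = 1},
        ⨆ x : B1, ‖(‖F' x (y : B1)‖)⁻¹ • F' x (y : B1) - (z : B2)‖)
    (hα : αF < 1) :
    ∀ x y : B1, (1 - αF) * A * ‖y‖ ≤ ‖F (x + y) - F x‖ ∧ ‖F (x + y) - F x‖ ≤ B * ‖y‖ := by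
  intro x y
  have hupper : ‖F (x + y) - F x‖ ≤ B * ‖y‖ := by
    have h := Convex.norm_image_sub_le_of_norm_hasFDerivWithin_le
      (f := F) (f' := F') (s := Set.univ) (C := B)
      (fun w _ => (hF w).hasFDerivWithinAt)
      (fun w _ => ContinuousLinearMap.opNorm_le_bound _ hB.le (fun v => (hstab w v).2))
      convex_univ (Set.mem_univ x) (Set.mem_univ (x + y))
    simpa using h
  refine ⟨?_, hupper⟩
  rcases eq_or_ne y 0 with rfl | hy
  · simp
  have hyn : 0 < ‖y‖ := norm_pos_iff.mpr hy
  set yh : B1 := ‖y‖⁻¹ • y with hyhdef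
  have hyh : ‖yh‖ = 1 := by
    rw [hyhdef, norm_smul, norm_inv, norm_norm, inv_mul_cancel₀ hyn.ne']
  have hyyh : y = ‖y‖ • yh := by rw [hyhdef, smul_smul, mul_inv_cancel₀ hyn.ne', one_smul]
  have hAle : ∀ w : B1, A ≤ ‖F' w yh‖ := fun w => by
    have := (hstab w yh).1; rwa [hyh, mul_one] at this
  have hne : ∀ w : B1, F' w yh ≠ 0 := fun w h => by
    have := hAle w; rw [h, norm_zero] at this; linarith
  haveI hzne : Nonempty {z : B2 // ‖z‖ = 1} :=
    ⟨⟨‖F' 0 yh‖⁻¹ • F' 0 yh, by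
      rw [norm_smul, norm_inv, norm_norm,
        inv_mul_cancel₀ (norm_ne_zero_iff.mpr (hne 0))]⟩⟩
  -- every term in the inner sup is bounded by 2
  have hterm2 : ∀ (u : B1) (w : B1) (z : B2), ‖z‖ = 1 →
      ‖(‖F' w u‖)⁻¹ • F' w u - z‖ ≤ 2 := by
    intro u w z hz
    have h1 : ‖(‖F' w u‖)⁻¹ • F' w u‖ ≤ 1 := by
      rcases eq_or_ne (F' w u) 0 with h | h
      · simp [h]
      · rw [norm_smul, norm_inv, norm_norm, inv_mul_cancel₀ (norm_ne_zero_iff.mpr h)]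
    calc ‖(‖F' w u‖)⁻¹ • F' w u - z‖ ≤ ‖(‖F' w u‖)⁻¹ • F' w u‖ + ‖z‖ := norm_sub_le _ _
      _ ≤ 2 := by rw [hz]; linarith
  -- the key estimate for every small ε
  have key : ∀ ε : ℝ, 0 < ε → ε < 1 - αF →
      (1 - αF - ε) * (A * ‖y‖) ≤ ‖F (x + y) - F x‖ := by
    intro ε hε hε1
    -- the inf over z for yh is at most αF
    have hinf_le : (⨅ z : {z : B2 // ‖z‖ = 1},
        ⨆ w : B1, ‖(‖F' w yh‖)⁻¹ • F' w yh - (z : B2)‖) ≤ αF := by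
      rw [hαdef]
      apply le_ciSup (f := fun y : {y : B1 // ‖y‖ = 1} => ⨅ z : {z : B2 // ‖z‖ = 1},
        ⨆ x : B1, ‖(‖F' x (y : B1)‖)⁻¹ • F' x (y : B1) - (z : B2)‖)
        ?_ (⟨yh, hyh⟩ : {y : B1 // ‖y‖ = 1})
      refine ⟨2, ?_⟩
      rintro a ⟨u, rfl⟩
      obtain ⟨z⟩ := hzne
      refine le_trans (ciInf_le ⟨0, ?_⟩ z) ?_
      · rintro b ⟨z', rfl⟩
        exact Real.iSup_nonneg (fun w => norm_nonneg _)
      · exact Real.iSup_le (fun w => hterm2 u w z z.2) (by norm_num)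
    obtain ⟨z, hz⟩ : ∃ z : {z : B2 // ‖z‖ = 1},
        (⨆ w : B1, ‖(‖F' w yh‖)⁻¹ • F' w yh - (z : B2)‖) < αF + ε :=
      exists_lt_of_ciInf_lt (lt_of_le_of_lt hinf_le (by linarith))
    have hzbound : ∀ w : B1, ‖(‖F' w yh‖)⁻¹ • F' w yh - (z : B2)‖ < αF + ε := by
      intro w
      refine lt_of_le_of_lt ?_ hz
      exact le_ciSup (f := fun w' : B1 => ‖(‖F' w' yh‖)⁻¹ • F' w' yh - (z : B2)‖)
        ⟨2, by rintro a ⟨w', rfl⟩; exact hterm2 yh w' z z.2⟩ w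
    -- dual functional
    have hz0 : (z : B2) ≠ 0 := fun h => by
      have := z.2; rw [h, norm_zero] at this; norm_num at this
    obtain ⟨φ, hφnorm, hφz⟩ := exists_dual_vector ℝ (z : B2) (norm_ne_zero_iff.mpr hz0)
    rw [z.2] at hφz
    -- pointwise lower bound on φ (F' w y)
    have hkey : ∀ w : B1, (1 - αF - ε) * (A * ‖y‖) ≤ φ (F' w y) := by
      intro w
      set v := F' w yh with hv
      have hnv : 0 < ‖v‖ := lt_of_lt_of_le hA (hAle w)
      have hu1 : φ ((‖v‖)⁻¹ • v) ≥ 1 - (αF + ε) := by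
        have h1 : φ (z : B2) - φ ((‖v‖)⁻¹ • v) ≤ ‖(‖v‖)⁻¹ • v - (z : B2)‖ := by
          have : φ ((z : B2) - (‖v‖)⁻¹ • v) ≤ ‖φ‖ * ‖(z : B2) - (‖v‖)⁻¹ • v‖ :=
            le_trans (le_abs_self _) (φ.le_opNorm _)
          rw [map_sub, hφnorm, one_mul, norm_sub_rev] at this
          exact this
        have h2 := (hzbound w).le
        simp only [RCLike.ofReal_real_eq_id, id] at hφz
        linarith [hφz ▸ h1]
      have hφv : (1 - αF - ε) * A ≤ φ v := by
        have hv' : v = ‖v‖ • ((‖v‖)⁻¹ • v) := (smul_inv_smul₀ hnv.ne' v).symm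
        have : φ v = ‖v‖ * φ ((‖v‖)⁻¹ • v) := by
          conv_lhs => rw [hv']
          rw [map_smul, smul_eq_mul]
        rw [this]
        have h3 : (0:ℝ) < 1 - (αF + ε) := by linarith
        calc (1 - αF - ε) * A ≤ (1 - (αF + ε)) * ‖v‖ := by
              have := hAle w; nlinarith
          _ ≤ ‖v‖ * φ ((‖v‖)⁻¹ • v) := by nlinarith
      have : φ (F' w y) = ‖y‖ * φ v := by
        conv_lhs => rw [hyyh]
        rw [map_smul, map_smul, smul_eq_mul]
      rw [this]
      nlinarith
    -- monotonicity argument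
    set c : ℝ := (1 - αF - ε) * (A * ‖y‖) with hc
    set g : ℝ → ℝ := fun t => φ (F (x + t • y)) - c * t with hg
    have hder : ∀ t : ℝ, HasDerivAt g (φ (F' (x + t • y) y) - c) t := by
      intro t
      have h1 : HasDerivAt (fun t : ℝ => x + t • y) y t := by
        simpa using ((hasDerivAt_id t).smul_const y).const_add x
      have h2 : HasDerivAt (fun t : ℝ => F (x + t • y)) (F' (x + t • y) y) t := by
        exact (hF (x + t • y)).comp_hasDerivAt t h1
      have h3 : HasDerivAt (fun t : ℝ => φ (F (x + t • y))) (φ (F' (x + t • y) y)) t := by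
        exact (φ.hasFDerivAt.comp_hasDerivAt t h2)
      have h4 := h3.sub ((hasDerivAt_id t).const_mul c)
      simp only [mul_one] at h4
      exact h4
    have hmono : Monotone g := by
      apply monotone_of_deriv_nonneg
      · exact fun t => (hder t).differentiableAt
      · intro t
        rw [(hder t).deriv]
        have := hkey (x + t • y)
        simp only [hc] at this ⊢
        linarith
    have h01 := hmono (by norm_num : (0:ℝ) ≤ 1)
    simp only [hg, zero_smul, add_zero, one_smul, mul_zero, mul_one, sub_zero] at h01
    have hφΔ : c ≤ φ (F (x + y) - F x) := by rw [map_sub]; linarith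
    calc (1 - αF - ε) * (A * ‖y‖) = c := hc
      _ ≤ φ (F (x + y) - F x) := hφΔ
      _ ≤ ‖F (x + y) - F x‖ := by
        have := le_trans (le_abs_self _) (φ.le_opNorm (F (x + y) - F x))
        rwa [hφnorm, one_mul] at this
  -- pass to the limit ε → 0
  have hfinal : ∀ ε : ℝ, 0 < ε → (1 - αF) * A * ‖y‖ ≤ ‖F (x + y) - F x‖ + ε := by
    intro ε hε
    set ε' := min (ε / (A * ‖y‖)) ((1 - αF) / 2) with hε'
    have hApos : 0 < A * ‖y‖ := mul_pos hA hyn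
    have hε'pos : 0 < ε' := lt_min (div_pos hε hApos) (by linarith)
    have hε'lt : ε' < 1 - αF := lt_of_le_of_lt (min_le_right _ _) (by linarith)
    have h1 := key ε' hε'pos hε'lt
    have h2 : ε' * (A * ‖y‖) ≤ ε := by
      have := min_le_left (ε / (A * ‖y‖)) ((1 - αF) / 2)
      calc ε' * (A * ‖y‖) ≤ (ε / (A * ‖y‖)) * (A * ‖y‖) := by nlinarith
        _ = ε := div_mul_cancel₀ ε hApos.ne'
    nlinarith
  exact le_of_forall_pos_le_add hfinal
end

section
/- Let F : B1 → B2 be a continuously differentiable map between Banach spaces whose derivative is uniformly stable with constants A, B > 0, and let T ∈ B(B1,B2) be a bounded linear operator that is bounded below (inf_{y≠0} ‖Ty‖/‖y‖ > 0). If β_{F,T} := sup_{0≠y∈B1} sup_{x∈B1} ‖F'(x)y/‖F'(x)y‖ − Ty/‖Ty‖‖ < 1, then F is bi-Lipschitz: (1−β_{F,T})·A·‖x−y‖ ≤ ‖F(x)−F(y)‖ ≤ B‖x−y‖ for all x, y ∈ B1. -/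
/-- If `F` is continuously differentiable between Banach spaces with uniformly
stable derivative (constants `A, B > 0`), `T` is a bounded below bounded linear operator, and
`β_{F,T} := sup_{y≠0} sup_{x} ‖F'(x)y/‖F'(x)y‖ − Ty/‖Ty‖‖ < 1`, then `F` is bi-Lipschitz:
`(1−β_{F,T})·A·‖x−y‖ ≤ ‖F(x)−F(y)‖ ≤ B‖x−y‖`. -/
theorem bilipschitz_of_betaFT_lt_one
    {B1 B2 : Type*} [NormedAddCommGroup B1] [NormedSpace ℝ B1] [CompleteSpace B1]
    [NormedAddCommGroup B2] [NormedSpace ℝ B2] [CompleteSpace B2]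
    (F : B1 → B2) (F' : B1 → B1 →L[ℝ] B2)
    (hF : ∀ x : B1, HasFDerivAt F (F' x) x)
    (hF'cont : Continuous F')
    (A B : ℝ) (hA : 0 < A) (hB : 0 < B)
    (hstab : ∀ x y : B1, A * ‖y‖ ≤ ‖F' x y‖ ∧ ‖F' x y‖ ≤ B * ‖y‖)
    (T : B1 →L[ℝ] B2)
    (hTbb : ∃ c > 0, ∀ y : B1, c * ‖y‖ ≤ ‖T y‖)
    (βFT : ℝ)
    (hβdef : βFT = ⨆ y : {y : B1 // y ≠ 0}, ⨆ x : B1,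
        ‖(‖F' x (y : B1)‖)⁻¹ • F' x (y : B1) - (‖T (y : B1)‖)⁻¹ • T (y : B1)‖)
    (hβ : βFT < 1) :
    ∀ x y : B1, (1 - βFT) * A * ‖x - y‖ ≤ ‖F x - F y‖ ∧ ‖F x - F y‖ ≤ B * ‖x - y‖ := by
  obtain ⟨c, hc, hcle⟩ := hTbb
  -- auxiliary: each term is bounded by 2
  have hF'ne : ∀ (z w : B1), w ≠ 0 → F' z w ≠ 0 := by
    intro z w hw h
    have h1 := (hstab z w).1
    rw [h, norm_zero] at h1
    have hw0 : ‖w‖ = 0 := by nlinarith [norm_nonneg w]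
    exact hw (norm_eq_zero.mp hw0)
  have hTne : ∀ (w : B1), w ≠ 0 → T w ≠ 0 := by
    intro w hw h
    have h1 := hcle w
    rw [h, norm_zero] at h1
    have hw0 : ‖w‖ = 0 := by nlinarith [norm_nonneg w]
    exact hw (norm_eq_zero.mp hw0)
  have hbd : ∀ (y' : {y : B1 // y ≠ 0}) (x : B1),
      ‖(‖F' x (y' : B1)‖)⁻¹ • F' x (y' : B1) - (‖T (y' : B1)‖)⁻¹ • T (y' : B1)‖ ≤ 2 := by
    intro y' x
    have e1 : ‖(‖F' x (y' : B1)‖)⁻¹ • F' x (y' : B1)‖ = 1 := by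
      rw [norm_smul, norm_inv, norm_norm,
        inv_mul_cancel₀ (norm_ne_zero_iff.mpr (hF'ne x _ y'.2))]
    have e2 : ‖(‖T (y' : B1)‖)⁻¹ • T (y' : B1)‖ = 1 := by
      rw [norm_smul, norm_inv, norm_norm,
        inv_mul_cancel₀ (norm_ne_zero_iff.mpr (hTne _ y'.2))]
    refine le_trans (norm_sub_le _ _) ?_
    rw [e1, e2]; norm_num
  -- each term is ≤ βFT
  have hβge : ∀ (z w : B1), w ≠ 0 →
      ‖(‖F' z w‖)⁻¹ • F' z w - (‖T w‖)⁻¹ • T w‖ ≤ βFT := by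
    intro z w hw
    rw [hβdef]
    have hbdd1 : BddAbove (Set.range fun x : B1 =>
        ‖(‖F' x w‖)⁻¹ • F' x w - (‖T w‖)⁻¹ • T w‖) := by
      refine ⟨2, ?_⟩
      rintro _ ⟨x, rfl⟩
      exact hbd ⟨w, hw⟩ x
    have h1 : ‖(‖F' z w‖)⁻¹ • F' z w - (‖T w‖)⁻¹ • T w‖ ≤
        ⨆ x : B1, ‖(‖F' x w‖)⁻¹ • F' x w - (‖T w‖)⁻¹ • T w‖ :=
      le_ciSup hbdd1 z
    refine le_trans h1 ?_
    have hbdd2 : BddAbove (Set.range fun y' : {y : B1 // y ≠ 0} => ⨆ x : B1,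
        ‖(‖F' x (y' : B1)‖)⁻¹ • F' x (y' : B1) - (‖T (y' : B1)‖)⁻¹ • T (y' : B1)‖) := by
      refine ⟨2, ?_⟩
      rintro _ ⟨y', rfl⟩
      exact ciSup_le fun x => hbd y' x
    exact le_ciSup hbdd2 ⟨w, hw⟩
  intro x y
  constructor
  · rcases eq_or_ne x y with rfl | hxy
    · simp
    · set v := x - y with hv
      have hv0 : v ≠ 0 := sub_ne_zero.mpr hxy
      have hTv : T v ≠ 0 := hTne v hv0
      obtain ⟨f, hf1, hfv⟩ := exists_dual_vector ℝ (T v) (norm_ne_zero_iff.mpr hTv)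
      have hfv' : f (T v) = ‖T v‖ := by simpa using hfv
      have key : ∀ z : B1, (1 - βFT) * A * ‖v‖ ≤ f (F' z v) := by
        intro z
        have hFz : F' z v ≠ 0 := hF'ne z v hv0
        set u : B2 := (‖F' z v‖)⁻¹ • F' z v with hu
        set w : B2 := (‖T v‖)⁻¹ • T v with hw
        have hβuw : ‖u - w‖ ≤ βFT := hβge z v hv0
        have hfw : f w = 1 := by
          rw [hw, map_smul, hfv', smul_eq_mul,
            inv_mul_cancel₀ (norm_ne_zero_iff.mpr hTv)]
        have habs : |f (u - w)| ≤ βFT := by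
          have h1 := f.le_opNorm (u - w)
          rw [hf1, one_mul, Real.norm_eq_abs] at h1
          linarith
        have hfu : 1 - βFT ≤ f u := by
          have h2 : f u = f w + f (u - w) := by rw [map_sub]; ring
          have h3 : -βFT ≤ f (u - w) := neg_le_of_abs_le habs
          rw [h2, hfw]; linarith
        have hrec : F' z v = ‖F' z v‖ • u := by
          rw [hu, smul_inv_smul₀ (norm_ne_zero_iff.mpr hFz)]
        have hAle := (hstab z v).1
        have h4 : f (F' z v) = ‖F' z v‖ * f u := by
          conv_lhs => rw [hrec]
          rw [map_smul, smul_eq_mul]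
        rw [h4]
        have h1β : (0:ℝ) < 1 - βFT := by linarith
        calc (1 - βFT) * A * ‖v‖ = (1 - βFT) * (A * ‖v‖) := by ring
          _ ≤ (1 - βFT) * ‖F' z v‖ := by
              exact mul_le_mul_of_nonneg_left hAle h1β.le
          _ ≤ ‖F' z v‖ * f u := by
              rw [mul_comm]
              exact mul_le_mul_of_nonneg_left hfu (norm_nonneg _)
      set C := (1 - βFT) * A * ‖v‖ with hC
      have hg : ∀ t : ℝ, HasDerivAt (fun t : ℝ => f (F (y + t • v)) - C * t)
          (f (F' (y + t • v) v) - C) t := by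
        intro t
        have h1 : HasDerivAt (fun t : ℝ => y + t • v) v t := by
          simpa using ((hasDerivAt_id t).smul_const v).const_add y
        have h2 := (hF (y + t • v)).comp_hasDerivAt t h1
        have h3 := f.hasFDerivAt.comp_hasDerivAt t h2
        have h4 := h3.sub ((hasDerivAt_id t).const_mul C)
        rw [mul_one] at h4
        exact h4
      have hmono : Monotone fun t : ℝ => f (F (y + t • v)) - C * t := by
        apply monotone_of_deriv_nonneg
        · exact fun t => (hg t).differentiableAt
        · intro t
          rw [(hg t).deriv]
          linarith [key (y + t • v)]
      have h01 := hmono (by norm_num : (0:ℝ) ≤ 1)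
      simp only [zero_smul, one_smul, add_zero, mul_zero, mul_one, sub_zero] at h01
      have hyv : y + v = x := by rw [hv]; abel
      rw [hyv] at h01
      have h5 : C ≤ f (F x) - f (F y) := by linarith
      have h6 : f (F x) - f (F y) = f (F x - F y) := by rw [map_sub]
      have h7 : f (F x - F y) ≤ ‖F x - F y‖ := by
        have h8 := f.le_opNorm (F x - F y)
        rw [hf1, one_mul, Real.norm_eq_abs] at h8
        exact le_trans (le_abs_self _) h8
      calc (1 - βFT) * A * ‖x - y‖ = C := rfl
        _ ≤ ‖F x - F y‖ := by rw [h6] at h5; linarith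
  · have hub : ∀ z : B1, ‖F' z‖ ≤ B := fun z =>
      ContinuousLinearMap.opNorm_le_bound _ hB.le (fun w => (hstab z w).2)
    have := Convex.norm_image_sub_le_of_norm_hasFDerivWithin_le
      (fun z _ => (hF z).hasFDerivWithinAt) (fun z _ => hub z) convex_univ
      (Set.mem_univ y) (Set.mem_univ x)
    simpa using this
end

section
/- Let F : B1 → B2 be a continuously differentiable map between Banach spaces whose derivative is uniformly stable, and let T ∈ B(B1,B2) be bounded below. If δ_{F,T} := sup_{0≠y∈B1} sup_{z∈B1} ‖F'(z)y − Ty‖/‖Ty‖ < 1/3, then F has the bi-Lipschitz property, i.e. there exist constants A', B' > 0 with A'‖x−y‖ ≤ ‖F(x)−F(y)‖ ≤ B'‖x−y‖ for all x, y ∈ B1. -/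
/-- For a continuously differentiable map `F` with uniformly stable derivative
and a bounded below linear operator `T`, if
`δ_{F,T} := sup_{y≠0} sup_{z} ‖F'(z)y − Ty‖/‖Ty‖ < 1/3`, then `F` is bi-Lipschitz. -/
theorem bilipschitz_of_deltaFT_lt_third
    {B1 B2 : Type*} [NormedAddCommGroup B1] [NormedSpace ℝ B1] [CompleteSpace B1]
    [NormedAddCommGroup B2] [NormedSpace ℝ B2] [CompleteSpace B2]
    (F : B1 → B2) (F' : B1 → B1 →L[ℝ] B2)
    (hF : ∀ x : B1, HasFDerivAt F (F' x) x)
    (hF'cont : Continuous F')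
    (A B : ℝ) (hA : 0 < A) (hB : 0 < B)
    (hstab : ∀ x y : B1, A * ‖y‖ ≤ ‖F' x y‖ ∧ ‖F' x y‖ ≤ B * ‖y‖)
    (T : B1 →L[ℝ] B2)
    (hTbb : ∃ c > 0, ∀ y : B1, c * ‖y‖ ≤ ‖T y‖)
    (δFT : ℝ)
    (hδdef : δFT = ⨆ y : {y : B1 // y ≠ 0}, ⨆ z : B1, ‖F' z (y : B1) - T (y : B1)‖ / ‖T (y : B1)‖)
    (hδ : δFT < 1 / 3) :
    ∃ A' B' : ℝ, 0 < A' ∧ 0 < B' ∧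
      ∀ x y : B1, A' * ‖x - y‖ ≤ ‖F x - F y‖ ∧ ‖F x - F y‖ ≤ B' * ‖x - y‖ := by
  obtain ⟨c, hc, hcT⟩ := hTbb
  set M : ℝ := (B + ‖T‖) / c with hM
  -- uniform bound on the quotients
  have hTpos : ∀ v : B1, v ≠ 0 → 0 < ‖T v‖ := fun v hv =>
    lt_of_lt_of_le (mul_pos hc (norm_pos_iff.2 hv)) (hcT v)
  have hbound : ∀ (y : B1), y ≠ 0 → ∀ z : B1,
      ‖F' z y - T y‖ / ‖T y‖ ≤ M := by
    intro y hy z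
    have hnum : ‖F' z y - T y‖ ≤ (B + ‖T‖) * ‖y‖ := by
      calc ‖F' z y - T y‖ ≤ ‖F' z y‖ + ‖T y‖ := norm_sub_le _ _
        _ ≤ B * ‖y‖ + ‖T‖ * ‖y‖ := add_le_add (hstab z y).2 (T.le_opNorm y)
        _ = (B + ‖T‖) * ‖y‖ := by ring
    have hy' : 0 < ‖y‖ := norm_pos_iff.2 hy
    calc ‖F' z y - T y‖ / ‖T y‖
        ≤ ((B + ‖T‖) * ‖y‖) / (c * ‖y‖) :=
          div_le_div₀ (by positivity) hnum (by positivity) (hcT y)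
      _ = M := by rw [hM, mul_div_mul_right _ _ (ne_of_gt hy')]
  -- key inequality: pointwise bound from the sup
  have hkey : ∀ (v : B1), v ≠ 0 → ∀ z : B1, ‖F' z v - T v‖ ≤ δFT * ‖T v‖ := by
    intro v hv z
    have hTv := hTpos v hv
    have h1 : ‖F' z v - T v‖ / ‖T v‖ ≤ δFT := by
      rw [hδdef]
      have hinner : (‖F' z v - T v‖ / ‖T v‖ : ℝ) ≤
          ⨆ w : B1, ‖F' w v - T v‖ / ‖T v‖ := by
        refine le_ciSup (f := fun w : B1 => ‖F' w v - T v‖ / ‖T v‖) ⟨M, ?_⟩ z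
        rintro r ⟨w, rfl⟩
        exact hbound v hv w
      refine hinner.trans ?_
      refine le_ciSup (f := fun y : {y : B1 // y ≠ 0} =>
        ⨆ z : B1, ‖F' z (y : B1) - T (y : B1)‖ / ‖T (y : B1)‖) ⟨M, ?_⟩ ⟨v, hv⟩
      rintro r ⟨⟨y, hy⟩, rfl⟩
      exact ciSup_le fun w => hbound y hy w
    calc ‖F' z v - T v‖ = ‖F' z v - T v‖ / ‖T v‖ * ‖T v‖ := by
          field_simp
      _ ≤ δFT * ‖T v‖ := mul_le_mul_of_nonneg_right h1 (norm_nonneg _)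
  refine ⟨2 / 3 * c, B, by positivity, hB, fun x y => ?_⟩
  rcases eq_or_ne x y with rfl | hxy
  · simp
  have hv : x - y ≠ 0 := sub_ne_zero.2 hxy
  -- the line segment
  set L : ℝ → B1 := fun t => y + t • (x - y) with hL
  have hL0 : L 0 = y := by simp [hL]
  have hL1 : L 1 = x := by simp [hL]
  have hLd : ∀ t : ℝ, HasDerivAt L (x - y) t := by
    intro t
    simpa [hL] using ((hasDerivAt_id t).smul_const (x - y)).const_add y
  have hFLd : ∀ t : ℝ, HasDerivAt (fun t => F (L t)) (F' (L t) (x - y)) t :=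
    fun t => (hF (L t)).comp_hasDerivAt t (hLd t)
  constructor
  · -- lower bound
    have hg : ∀ t ∈ Set.Icc (0 : ℝ) 1,
        HasDerivWithinAt (fun t => F (L t) - t • T (x - y))
          (F' (L t) (x - y) - T (x - y)) (Set.Icc (0 : ℝ) 1) t := by
      intro t _
      have h := ((hFLd t).sub ((hasDerivAt_id t).smul_const (T (x - y)))).hasDerivWithinAt
        (s := Set.Icc (0:ℝ) 1)
      simpa [Pi.sub_def] using h
    have hmain : ‖(F (L 1) - (1 : ℝ) • T (x - y)) - (F (L 0) - (0 : ℝ) • T (x - y))‖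
        ≤ δFT * ‖T (x - y)‖ :=
      norm_image_sub_le_of_norm_deriv_le_segment_01' hg
        (fun t _ => hkey (x - y) hv (L t))
    rw [hL0, hL1] at hmain
    simp only [one_smul, zero_smul, sub_zero] at hmain
    have hmain' : ‖(F x - F y) - T (x - y)‖ ≤ δFT * ‖T (x - y)‖ := by
      have : F x - T (x - y) - F y = (F x - F y) - T (x - y) := by abel
      rwa [this] at hmain
    have h2 : ‖T (x - y)‖ - δFT * ‖T (x - y)‖ ≤ ‖F x - F y‖ := by
      have htri : ‖T (x - y)‖ ≤ ‖F x - F y‖ + ‖(F x - F y) - T (x - y)‖ := by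
        have := norm_sub_le (F x - F y) ((F x - F y) - T (x - y))
        simpa using this
      linarith
    have h3 : δFT * ‖T (x - y)‖ ≤ 1 / 3 * ‖T (x - y)‖ :=
      mul_le_mul_of_nonneg_right hδ.le (norm_nonneg _)
    have h4 : c * ‖x - y‖ ≤ ‖T (x - y)‖ := hcT _
    nlinarith [norm_nonneg (x - y), norm_nonneg (T (x - y))]
  · -- upper bound
    have hg : ∀ t ∈ Set.Icc (0 : ℝ) 1,
        HasDerivWithinAt (fun t => F (L t)) (F' (L t) (x - y)) (Set.Icc (0 : ℝ) 1) t :=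
      fun t _ => (hFLd t).hasDerivWithinAt
    have hmain : ‖F (L 1) - F (L 0)‖ ≤ B * ‖x - y‖ :=
      norm_image_sub_le_of_norm_deriv_le_segment_01' hg
        (fun t _ => (hstab (L t) (x - y)).2)
    rwa [hL0, hL1] at hmain
end

section
/- Let H1 and H2 be Hilbert spaces and F : H1 → H2 a continuously differentiable map whose derivative is uniformly stable with constants A, B > 0. Suppose T ∈ B(H1,H2) is bounded below and β_{F,T} := sup_{0≠v∈H1} sup_{u∈H1} ‖F'(u)v/‖F'(u)v‖ − Tv/‖Tv‖‖ < √2. Then F is bi-Lipschitz; more precisely, ((2−β_{F,T}²)/2)·A·‖u−w‖ ≤ ‖F(u)−F(w)‖ ≤ B‖u−w‖ for all u, w ∈ H1. -/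
open Real
open scoped RealInnerProductSpace


/-- In Hilbert space setting, if `F` is continuously differentiable with
uniformly stable derivative (constants `A, B > 0`), `T` is bounded below and
`β_{F,T} = sup_{v≠0} sup_{u} ‖F'(u)v/‖F'(u)v‖ − Tv/‖Tv‖‖ < √2`, then `F` is bi-Lipschitz:
`((2−β²)/2)·A·‖u−w‖ ≤ ‖F(u)−F(w)‖ ≤ B‖u−w‖`. -/
theorem bilipschitz_of_betaFT_lt_sqrt_two
    {H1 H2 : Type*} [NormedAddCommGroup H1] [InnerProductSpace ℝ H1] [CompleteSpace H1]
    [NormedAddCommGroup H2] [InnerProductSpace ℝ H2] [CompleteSpace H2]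
    (F : H1 → H2) (F' : H1 → H1 →L[ℝ] H2)
    (hF : ∀ x : H1, HasFDerivAt F (F' x) x)
    (hF'cont : Continuous F')
    (A B : ℝ) (hA : 0 < A) (hB : 0 < B)
    (hstab : ∀ x y : H1, A * ‖y‖ ≤ ‖F' x y‖ ∧ ‖F' x y‖ ≤ B * ‖y‖)
    (T : H1 →L[ℝ] H2)
    (hTbb : ∃ c > 0, ∀ y : H1, c * ‖y‖ ≤ ‖T y‖)
    (βFT : ℝ)
    (hβdef : βFT = ⨆ v : {v : H1 // v ≠ 0}, ⨆ u : H1,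
        ‖(‖F' u (v : H1)‖)⁻¹ • F' u (v : H1) - (‖T (v : H1)‖)⁻¹ • T (v : H1)‖)
    (hβ : βFT < Real.sqrt 2) :
    ∀ u w : H1, (2 - βFT ^ 2) / 2 * A * ‖u - w‖ ≤ ‖F u - F w‖ ∧ ‖F u - F w‖ ≤ B * ‖u - w‖ := by
  intro u w
  constructor
  · -- lower bound
    rcases eq_or_ne u w with rfl | hne
    · simp
    set v : H1 := u - w with hv
    have hv0 : v ≠ 0 := sub_ne_zero.mpr hne
    have hvnorm : 0 < ‖v‖ := norm_pos_iff.mpr hv0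
    obtain ⟨c, hc, hT⟩ := hTbb
    have hTv : T v ≠ 0 := by
      intro h
      have := hT v
      rw [h, norm_zero] at this
      nlinarith
    set w0 : H2 := (‖T v‖)⁻¹ • T v with hw0def
    have hw0 : ‖w0‖ = 1 := norm_smul_inv_norm hTv
    -- each term ≤ βFT
    have hterm_le_two : ∀ (vv : H1) (x : H1),
        ‖(‖F' x vv‖)⁻¹ • F' x vv - (‖T vv‖)⁻¹ • T vv‖ ≤ 2 := by
      intro vv x
      have h1 : ‖(‖F' x vv‖)⁻¹ • F' x vv‖ ≤ 1 := by
        rw [norm_smul, norm_inv, norm_norm]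
        rcases eq_or_ne (‖F' x vv‖) 0 with h | h
        · simp [h]
        · rw [inv_mul_cancel₀ h]
      have h2 : ‖(‖T vv‖)⁻¹ • T vv‖ ≤ 1 := by
        rw [norm_smul, norm_inv, norm_norm]
        rcases eq_or_ne (‖T vv‖) 0 with h | h
        · simp [h]
        · rw [inv_mul_cancel₀ h]
      calc ‖(‖F' x vv‖)⁻¹ • F' x vv - (‖T vv‖)⁻¹ • T vv‖
          ≤ ‖(‖F' x vv‖)⁻¹ • F' x vv‖ + ‖(‖T vv‖)⁻¹ • T vv‖ := norm_sub_le _ _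
        _ ≤ 2 := by linarith
    have hkey : ∀ x : H1, ‖(‖F' x v‖)⁻¹ • F' x v - w0‖ ≤ βFT := by
      intro x
      have hbdd : BddAbove (Set.range fun y : H1 =>
          ‖(‖F' y v‖)⁻¹ • F' y v - (‖T v‖)⁻¹ • T v‖) := by
        refine ⟨2, ?_⟩
        rintro _ ⟨y, rfl⟩
        exact hterm_le_two v y
      have h1 : ‖(‖F' x v‖)⁻¹ • F' x v - (‖T v‖)⁻¹ • T v‖
          ≤ ⨆ y : H1, ‖(‖F' y v‖)⁻¹ • F' y v - (‖T v‖)⁻¹ • T v‖ := le_ciSup hbdd x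
      have hbdd2 : BddAbove (Set.range fun vv : {v : H1 // v ≠ 0} => ⨆ y : H1,
          ‖(‖F' y (vv : H1)‖)⁻¹ • F' y (vv : H1) - (‖T (vv : H1)‖)⁻¹ • T (vv : H1)‖) := by
        refine ⟨2, ?_⟩
        rintro _ ⟨vv, rfl⟩
        exact ciSup_le fun y => hterm_le_two vv y
      have h2 : (⨆ y : H1, ‖(‖F' y v‖)⁻¹ • F' y v - (‖T v‖)⁻¹ • T v‖) ≤ βFT := by
        rw [hβdef]
        exact le_ciSup hbdd2 ⟨v, hv0⟩
      exact h1.trans h2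
    have hβ0 : 0 ≤ βFT := le_trans (norm_nonneg _) (hkey u)
    have hβ2 : βFT ^ 2 < 2 := by
      nlinarith [Real.sq_sqrt (by norm_num : (0:ℝ) ≤ 2), Real.sqrt_nonneg 2]
    -- inner product lower bound for derivative
    have hinner : ∀ x : H1,
        (2 - βFT ^ 2) / 2 * (A * ‖v‖) ≤ ⟪F' x v, w0⟫ := by
      intro x
      have hFxv : F' x v ≠ 0 := by
        intro h
        have := (hstab x v).1
        rw [h, norm_zero] at this
        nlinarith
      have hFn : 0 < ‖F' x v‖ := norm_pos_iff.mpr hFxv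
      set a : H2 := (‖F' x v‖)⁻¹ • F' x v with ha
      have hanorm : ‖a‖ = 1 := norm_smul_inv_norm hFxv
      have hsq : ‖a - w0‖ ^ 2 = 2 - 2 * ⟪a, w0⟫ := by
        rw [← real_inner_self_eq_norm_sq]
        rw [inner_sub_sub_self]
        rw [real_inner_self_eq_norm_sq, real_inner_self_eq_norm_sq, hanorm, hw0,
          real_inner_comm w0 a]
        ring
      have hab : ‖a - w0‖ ≤ βFT := hkey x
      have h1 : (2 - βFT ^ 2) / 2 ≤ ⟪a, w0⟫ := by
        nlinarith [norm_nonneg (a - w0)]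
      have h2 : ⟪F' x v, w0⟫ = ‖F' x v‖ * ⟪a, w0⟫ := by
        rw [ha, real_inner_smul_left]
        field_simp
      rw [h2]
      have h3 : A * ‖v‖ ≤ ‖F' x v‖ := (hstab x v).1
      have h4 : (0:ℝ) ≤ (2 - βFT ^ 2) / 2 := by nlinarith
      nlinarith [mul_le_mul_of_nonneg_right h3 (le_trans h4 h1)]
    -- define g and compute
    set g : ℝ → ℝ := fun t => ⟪F (w + t • v), w0⟫ with hg
    have hderiv : ∀ t : ℝ, HasDerivAt g (⟪F' (w + t • v) v, w0⟫) t := by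
      intro t
      have hp : HasDerivAt (fun t : ℝ => w + t • v) v t := by
        have : HasDerivAt (fun t : ℝ => t • v) ((1:ℝ) • v) t :=
          (hasDerivAt_id t).smul_const v
        simpa using this.const_add w
      have hFp : HasDerivAt (fun t : ℝ => F (w + t • v)) (F' (w + t • v) v) t :=
        (hF (w + t • v)).comp_hasDerivAt t hp
      have := hFp.inner ℝ (hasDerivAt_const t w0)
      simpa using this
    set C : ℝ := (2 - βFT ^ 2) / 2 * (A * ‖v‖) with hC
    have hmono : Monotone (fun t => g t - C * t) := by
      have hd : ∀ t : ℝ, HasDerivAt (fun t => g t - C * t)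
          (⟪F' (w + t • v) v, w0⟫ - C) t := by
        intro t
        exact ((hderiv t).sub ((hasDerivAt_id t).const_mul C)).congr_deriv (by rw [mul_one])
      apply monotone_of_deriv_nonneg
      · exact fun t => (hd t).differentiableAt
      · intro t
        rw [(hd t).deriv]
        have := hinner (w + t • v)
        linarith
    have hkey2 : C ≤ g 1 - g 0 := by
      have := hmono (by norm_num : (0:ℝ) ≤ 1)
      simp only at this
      linarith
    have hg1 : g 1 = ⟪F u, w0⟫ := by
      simp [hg, hv]
    have hg0 : g 0 = ⟪F w, w0⟫ := by
      simp [hg]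
    have hfinal : C ≤ ⟪F u - F w, w0⟫ := by
      rw [inner_sub_left]
      rw [hg1, hg0] at hkey2
      linarith
    have hle : ⟪F u - F w, w0⟫ ≤ ‖F u - F w‖ := by
      have := real_inner_le_norm (F u - F w) w0
      rw [hw0] at this
      linarith [this]
    calc (2 - βFT ^ 2) / 2 * A * ‖u - w‖ = C := by rw [hC, hv]; ring_nf
      _ ≤ ⟪F u - F w, w0⟫ := hfinal
      _ ≤ ‖F u - F w‖ := hle
  · -- upper bound
    have hop : ∀ x : H1, ‖F' x‖ ≤ B :=
      fun x => ContinuousLinearMap.opNorm_le_bound _ hB.le (fun y => (hstab x y).2)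
    have := Convex.norm_image_sub_le_of_norm_hasFDerivWithin_le
      (f := F) (f' := F') (s := Set.univ)
      (fun x _ => (hF x).hasFDerivWithinAt) (fun x _ => hop x)
      convex_univ (Set.mem_univ w) (Set.mem_univ u)
    exact this
end

section
/- Let H1 and H2 be Hilbert spaces and F : H1 → H2 a continuously differentiable map whose derivative is uniformly stable. Suppose there exists a bounded below linear operator T ∈ B(H1,H2) and constants A₁, B₁ > 0 such that A₁‖Tv‖² ≤ ⟨F'(u)v, Tv⟩ ≤ B₁‖Tv‖² for all u, v ∈ H1. Then F has the bi-Lipschitz property: there exist constants A', B' > 0 with A'‖u−w‖ ≤ ‖F(u)−F(w)‖ ≤ B'‖u−w‖ for all u, w ∈ H1. -/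
open scoped RealInnerProductSpace

/-- In Hilbert space setting, if `F` is continuously differentiable with
uniformly stable derivative and there exist a bounded below linear operator `T` and constants
`A₁, B₁ > 0` with `A₁‖Tv‖² ≤ ⟨F'(u)v, Tv⟩ ≤ B₁‖Tv‖²` for all `u, v`, then `F` is bi-Lipschitz. -/
theorem bilipschitz_of_positivity_condition
    {H1 H2 : Type*} [NormedAddCommGroup H1] [InnerProductSpace ℝ H1] [CompleteSpace H1]
    [NormedAddCommGroup H2] [InnerProductSpace ℝ H2] [CompleteSpace H2]
    (F : H1 → H2) (F' : H1 → H1 →L[ℝ] H2)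
    (hF : ∀ x : H1, HasFDerivAt F (F' x) x)
    (hF'cont : Continuous F')
    (A B : ℝ) (hA : 0 < A) (hB : 0 < B)
    (hstab : ∀ x y : H1, A * ‖y‖ ≤ ‖F' x y‖ ∧ ‖F' x y‖ ≤ B * ‖y‖)
    (T : H1 →L[ℝ] H2)
    (hTbb : ∃ c > 0, ∀ y : H1, c * ‖y‖ ≤ ‖T y‖)
    (A₁ B₁ : ℝ) (hA₁ : 0 < A₁) (hB₁ : 0 < B₁)
    (hpos : ∀ u v : H1, A₁ * ‖T v‖ ^ 2 ≤ ⟪F' u v, T v⟫ ∧ ⟪F' u v, T v⟫ ≤ B₁ * ‖T v‖ ^ 2) :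
    ∃ A' B' : ℝ, 0 < A' ∧ 0 < B' ∧
      ∀ u w : H1, A' * ‖u - w‖ ≤ ‖F u - F w‖ ∧ ‖F u - F w‖ ≤ B' * ‖u - w‖ := by
  obtain ⟨c, hc, hT⟩ := hTbb
  refine ⟨A₁ * c ^ 2 / (‖T‖ + 1), B, div_pos (by positivity) (by positivity), hB, fun u w => ?_⟩
  have hFnormle : ∀ x : H1, ‖F' x‖ ≤ B := fun x =>
    ContinuousLinearMap.opNorm_le_bound _ hB.le (fun y => (hstab x y).2)
  constructor
  · -- lower bound
    rcases eq_or_ne u w with rfl | huw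
    · simp
    set v := u - w with hv
    have hvne : v ≠ 0 := sub_ne_zero.mpr huw
    set φ : ℝ → ℝ := fun t => ⟪F (w + t • v), T v⟫ with hφdef
    have hφ : ∀ t : ℝ, HasDerivAt φ ⟪F' (w + t • v) v, T v⟫ t := by
      intro t
      have hline : HasDerivAt (fun t : ℝ => w + t • v) v t := by
        simpa using ((hasDerivAt_id t).smul_const v).const_add w
      have hFc : HasDerivAt (fun t : ℝ => F (w + t • v)) (F' (w + t • v) v) t :=
        (hF (w + t • v)).comp_hasDerivAt t hline
      have := hFc.inner ℝ (hasDerivAt_const t (T v))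
      simpa using this
    set C : ℝ := A₁ * ‖T v‖ ^ 2 with hC
    have hmono : Monotone (fun t => φ t - C * t) := by
      have hdiff : Differentiable ℝ (fun t => φ t - C * t) := fun t =>
        ((hφ t).sub ((hasDerivAt_id t).const_mul C)).differentiableAt
      refine monotone_of_deriv_nonneg hdiff (fun t => ?_)
      have hd : HasDerivAt (fun t => φ t - C * t) (⟪F' (w + t • v) v, T v⟫ - C) t := by
        exact ((hφ t).sub ((hasDerivAt_id t).const_mul C)).congr_deriv (by simp)
      rw [hd.deriv]
      have := (hpos (w + t • v) v).1
      linarith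
    have hkey : C ≤ φ 1 - φ 0 := by
      have := hmono (show (0:ℝ) ≤ 1 by norm_num)
      simp only at this
      linarith
    have hφ1 : φ 1 = ⟪F u, T v⟫ := by simp [hφdef, hv]
    have hφ0 : φ 0 = ⟪F w, T v⟫ := by simp [hφdef]
    have hinner : C ≤ ⟪F u - F w, T v⟫ := by
      rw [inner_sub_left]; rw [hφ1, hφ0] at hkey; linarith
    have hCS : ⟪F u - F w, T v⟫ ≤ ‖F u - F w‖ * (‖T‖ * ‖v‖) := by
      calc ⟪F u - F w, T v⟫ ≤ ‖F u - F w‖ * ‖T v‖ := real_inner_le_norm _ _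
        _ ≤ ‖F u - F w‖ * (‖T‖ * ‖v‖) := by
            have := T.le_opNorm v
            exact mul_le_mul_of_nonneg_left this (norm_nonneg _)
    have hTv : c * ‖v‖ ≤ ‖T v‖ := hT v
    have hC2 : A₁ * c ^ 2 * ‖v‖ ^ 2 ≤ C := by
      rw [hC]
      have h1 : (c * ‖v‖) ^ 2 ≤ ‖T v‖ ^ 2 := by
        apply pow_le_pow_left₀ (by positivity) hTv
      nlinarith
    have hvpos : 0 < ‖v‖ := norm_pos_iff.mpr hvne
    have hTle : ‖T‖ ≤ ‖T‖ + 1 := by linarith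
    have hchain : A₁ * c ^ 2 * ‖v‖ ^ 2 ≤ ‖F u - F w‖ * ((‖T‖ + 1) * ‖v‖) := by
      have : ‖F u - F w‖ * (‖T‖ * ‖v‖) ≤ ‖F u - F w‖ * ((‖T‖ + 1) * ‖v‖) := by
        have : ‖T‖ * ‖v‖ ≤ (‖T‖ + 1) * ‖v‖ := by nlinarith
        exact mul_le_mul_of_nonneg_left this (norm_nonneg _)
      linarith
    rw [div_mul_eq_mul_div, div_le_iff₀ (by positivity)]
    nlinarith [norm_nonneg (F u - F w)]
  · -- upper bound
    have := Convex.norm_image_sub_le_of_norm_hasFDerivWithin_le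
      (fun x _ => (hF x).hasFDerivWithinAt) (fun x _ => hFnormle x)
      (convex_univ) (Set.mem_univ w) (Set.mem_univ u)
    simpa using this
end

section
/- Let H1 and H2 be Hilbert spaces and F : H1 → H2 a continuously differentiable map whose derivative is uniformly stable. If there exists a bounded below linear operator T ∈ B(H1,H2) with δ_{F,T} := sup_{0≠y∈H1} sup_{z∈H1} ‖F'(z)y − Ty‖/‖Ty‖ < √2 − 1, then F has the bi-Lipschitz property: there exist constants A', B' > 0 with A'‖u−w‖ ≤ ‖F(u)−F(w)‖ ≤ B'‖u−w‖ for all u, w ∈ H1. -/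
/-- In Hilbert space setting, if `F` is continuously differentiable with
uniformly stable derivative and there is a bounded below linear operator `T` with
`δ_{F,T} := sup_{y≠0} sup_{z} ‖F'(z)y − Ty‖/‖Ty‖ < √2 − 1`, then `F` is bi-Lipschitz. -/
theorem bilipschitz_of_deltaFT_lt_sqrt_two_sub_one
    {H1 H2 : Type*} [NormedAddCommGroup H1] [InnerProductSpace ℝ H1] [CompleteSpace H1]
    [NormedAddCommGroup H2] [InnerProductSpace ℝ H2] [CompleteSpace H2]
    (F : H1 → H2) (F' : H1 → H1 →L[ℝ] H2)
    (hF : ∀ x : H1, HasFDerivAt F (F' x) x)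
    (hF'cont : Continuous F')
    (A B : ℝ) (hA : 0 < A) (hB : 0 < B)
    (hstab : ∀ x y : H1, A * ‖y‖ ≤ ‖F' x y‖ ∧ ‖F' x y‖ ≤ B * ‖y‖)
    (T : H1 →L[ℝ] H2)
    (hTbb : ∃ c > 0, ∀ y : H1, c * ‖y‖ ≤ ‖T y‖)
    (δFT : ℝ)
    (hδdef : δFT = ⨆ y : {y : H1 // y ≠ 0}, ⨆ z : H1, ‖F' z (y : H1) - T (y : H1)‖ / ‖T (y : H1)‖)
    (hδ : δFT < Real.sqrt 2 - 1) :
    ∃ A' B' : ℝ, 0 < A' ∧ 0 < B' ∧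
      ∀ u w : H1, A' * ‖u - w‖ ≤ ‖F u - F w‖ ∧ ‖F u - F w‖ ≤ B' * ‖u - w‖ := by
  haveI : Nonempty H1 := ⟨0⟩
  obtain ⟨c, hc, hcT⟩ := hTbb
  set M : ℝ := (B + ‖T‖) / c with hM
  have hTy_pos : ∀ y : H1, y ≠ 0 → 0 < ‖T y‖ := by
    intro y hy
    have h1 : 0 < c * ‖y‖ := mul_pos hc (norm_pos_iff.mpr hy)
    linarith [hcT y]
  have hbound : ∀ (y : H1), y ≠ 0 → ∀ z : H1, ‖F' z y - T y‖ / ‖T y‖ ≤ M := by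
    intro y hy z
    have h1 : ‖F' z y - T y‖ ≤ (B + ‖T‖) * ‖y‖ := by
      calc ‖F' z y - T y‖ ≤ ‖F' z y‖ + ‖T y‖ := norm_sub_le _ _
        _ ≤ B * ‖y‖ + ‖T‖ * ‖y‖ := add_le_add (hstab z y).2 (T.le_opNorm y)
        _ = (B + ‖T‖) * ‖y‖ := by ring
    have hy0 : 0 < ‖y‖ := norm_pos_iff.mpr hy
    rw [div_le_iff₀ (hTy_pos y hy)]
    calc ‖F' z y - T y‖ ≤ (B + ‖T‖) * ‖y‖ := h1
      _ = M * (c * ‖y‖) := by rw [hM]; field_simp [hc.ne']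
      _ ≤ M * ‖T y‖ := by
          apply mul_le_mul_of_nonneg_left (hcT y)
          have : 0 ≤ B + ‖T‖ := by positivity
          positivity
  have hkey : ∀ y : H1, y ≠ 0 → ∀ z : H1, ‖F' z y - T y‖ ≤ δFT * ‖T y‖ := by
    intro y hy z
    have hle : ‖F' z y - T y‖ / ‖T y‖ ≤ δFT := by
      rw [hδdef]
      have h1 : ‖F' z y - T y‖ / ‖T y‖ ≤ ⨆ z : H1, ‖F' z y - T y‖ / ‖T y‖ :=
        le_ciSup ⟨M, by rintro _ ⟨z', rfl⟩; exact hbound y hy z'⟩ z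
      refine h1.trans ?_
      exact le_ciSup (f := fun (y : {y : H1 // y ≠ 0}) =>
          ⨆ z : H1, ‖F' z (y : H1) - T (y : H1)‖ / ‖T (y : H1)‖)
        ⟨M, by rintro _ ⟨⟨y', hy'⟩, rfl⟩; exact ciSup_le (fun z' => hbound y' hy' z')⟩ ⟨y, hy⟩
    rwa [div_le_iff₀ (hTy_pos y hy)] at hle
  have hδ1 : δFT < 1 := by
    have h2 : Real.sqrt 2 < 2 := by
      nlinarith [Real.sq_sqrt (show (0:ℝ) ≤ 2 by norm_num), Real.sqrt_nonneg 2]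
    linarith
  refine ⟨(1 - δFT) * c, B, mul_pos (by linarith) hc, hB, fun u w => ?_⟩
  constructor
  · -- lower bound
    rcases eq_or_ne u w with rfl | huw
    · simp
    have hy : u - w ≠ 0 := sub_ne_zero.mpr huw
    set y := u - w with hyd
    -- mean value on g t = F (w + t • y) - t • (T y)
    have hmv : ‖F u - F w - T y‖ ≤ δFT * ‖T y‖ := by
      have := norm_image_sub_le_of_norm_deriv_le_segment_01'
        (f := fun t : ℝ => F (w + t • y) - t • (T y))
        (f' := fun t : ℝ => F' (w + t • y) y - T y)
        (C := δFT * ‖T y‖) ?_ ?_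
      · have hwy : w + y = u := by simp [hyd]
        have := this
        simp only [hwy, one_smul, zero_smul, sub_zero, add_zero] at this
        calc ‖F u - F w - T y‖ = ‖F u - T y - F w‖ := by rw [sub_right_comm]
          _ ≤ δFT * ‖T y‖ := this
      · intro t ht
        have h1 : HasDerivAt (fun t : ℝ => w + t • y) y t := by
          simpa using ((hasDerivAt_id t).smul_const y).const_add w
        have h2 : HasDerivAt (fun t : ℝ => F (w + t • y)) (F' (w + t • y) y) t :=
          (hF (w + t • y)).comp_hasDerivAt t h1
        have h3 : HasDerivAt (fun t : ℝ => t • (T y)) (T y) t := by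
          simpa using (hasDerivAt_id t).smul_const (T y)
        exact (h2.sub h3).hasDerivWithinAt
      · intro t ht
        exact hkey y hy (w + t • y)
    have hTy := hcT y
    have h4 : ‖T y‖ - ‖F u - F w‖ ≤ δFT * ‖T y‖ := by
      have := norm_sub_norm_le (T y) (F u - F w)
      calc ‖T y‖ - ‖F u - F w‖ ≤ ‖T y - (F u - F w)‖ := norm_sub_norm_le _ _
        _ = ‖F u - F w - T y‖ := norm_sub_rev _ _
        _ ≤ δFT * ‖T y‖ := hmv
    calc (1 - δFT) * c * ‖u - w‖ ≤ (1 - δFT) * ‖T y‖ := by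
          rw [mul_assoc]
          exact mul_le_mul_of_nonneg_left (hcT y) (by linarith)
      _ ≤ ‖F u - F w‖ := by nlinarith
  · -- upper bound
    have hop : ∀ x : H1, ‖F' x‖ ≤ B :=
      fun x => ContinuousLinearMap.opNorm_le_bound _ hB.le (fun v => (hstab x v).2)
    have := (convex_univ : Convex ℝ (Set.univ : Set H1)).norm_image_sub_le_of_norm_hasFDerivWithin_le
      (f := F) (f' := F') (fun x _ => (hF x).hasFDerivWithinAt) (fun x _ => hop x)
      (Set.mem_univ w) (Set.mem_univ u)
    exact this
end

section
/- Let H1 and H2 be Hilbert spaces, F : H1 → H2 a continuously differentiable map whose derivative is uniformly stable, and T ∈ B(H1,H2) bounded below with β_{F,T} := sup_{0≠v∈H1} sup_{u∈H1} ‖F'(u)v/‖F'(u)v‖ − Tv/‖Tv‖‖ < √2. Set m_T := inf_{‖u‖=1} ‖Tu‖ and m_F := inf_{v∈H1} inf_{‖u‖=1} ‖F'(v)u‖. Then for all v₁, v₂ ∈ H1: ⟨v₁ − v₂, T*F(v₁) − T*F(v₂)⟩ ≥ ((2 − β_{F,T}²)/2)·m_T·m_F·‖v₁ − v₂‖²,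 where T* denotes the Hilbert-space adjoint of T. In particular the map T*F is strictly monotonic. -/
open scoped RealInnerProductSpace

/-- In Hilbert space setting, for `F` continuously differentiable with uniformly
stable derivative and `T` bounded below with `β_{F,T} < √2`, the map `T*∘F` satisfies
`⟨v₁−v₂, T*F(v₁)−T*F(v₂)⟩ ≥ ((2−β²)/2)·m_T·m_F·‖v₁−v₂‖²`, where `m_T = inf_{‖u‖=1} ‖Tu‖` and
`m_F = inf_v inf_{‖u‖=1} ‖F'(v)u‖`; in particular `T*∘F` is strictly monotonic. -/
theorem adjoint_comp_strictly_monotonic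
    {H1 H2 : Type*} [NormedAddCommGroup H1] [InnerProductSpace ℝ H1] [CompleteSpace H1]
    [NormedAddCommGroup H2] [InnerProductSpace ℝ H2] [CompleteSpace H2]
    (F : H1 → H2) (F' : H1 → H1 →L[ℝ] H2)
    (hF : ∀ x : H1, HasFDerivAt F (F' x) x)
    (hF'cont : Continuous F')
    (A B : ℝ) (hA : 0 < A) (hB : 0 < B)
    (hstab : ∀ x y : H1, A * ‖y‖ ≤ ‖F' x y‖ ∧ ‖F' x y‖ ≤ B * ‖y‖)
    (T : H1 →L[ℝ] H2)
    (hTbb : ∃ c > 0, ∀ y : H1, c * ‖y‖ ≤ ‖T y‖)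
    (βFT mT mF : ℝ)
    (hβdef : βFT = ⨆ v : {v : H1 // v ≠ 0}, ⨆ u : H1,
        ‖(‖F' u (v : H1)‖)⁻¹ • F' u (v : H1) - (‖T (v : H1)‖)⁻¹ • T (v : H1)‖)
    (hβ : βFT < Real.sqrt 2)
    (hmT : mT = ⨅ u : {u : H1 // ‖u‖ = 1}, ‖T (u : H1)‖)
    (hmF : mF = ⨅ v : H1, ⨅ u : {u : H1 // ‖u‖ = 1}, ‖F' v (u : H1)‖) :
    (∀ v₁ v₂ : H1,
      (2 - βFT ^ 2) / 2 * mT * mF * ‖v₁ - v₂‖ ^ 2 ≤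
        ⟪v₁ - v₂, (ContinuousLinearMap.adjoint T) (F v₁) - (ContinuousLinearMap.adjoint T) (F v₂)⟫) ∧
    ∃ m M : ℝ, 0 < m ∧ 0 < M ∧ ∀ u v : H1,
      m * ‖u - v‖ ^ 2 ≤
          ⟪u - v, (ContinuousLinearMap.adjoint T) (F u) - (ContinuousLinearMap.adjoint T) (F v)⟫ ∧
      ⟪u - v, (ContinuousLinearMap.adjoint T) (F u) - (ContinuousLinearMap.adjoint T) (F v)⟫ ≤
          M * ‖u - v‖ ^ 2 := by
  obtain ⟨c, hc, hcT⟩ := hTbb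
  -- basic nonnegativity
  have hβnn : 0 ≤ βFT := by
    rw [hβdef]
    exact Real.iSup_nonneg fun v => Real.iSup_nonneg fun u => norm_nonneg _
  have hβsq : βFT ^ 2 < 2 := by
    have h2 : (Real.sqrt 2) ^ 2 = 2 := Real.sq_sqrt (by norm_num)
    calc βFT ^ 2 < (Real.sqrt 2) ^ 2 := by
          apply pow_lt_pow_left₀ hβ hβnn; norm_num
      _ = 2 := h2
  have hmTnn : 0 ≤ mT := by
    rw [hmT]; exact Real.iInf_nonneg fun u => norm_nonneg _
  have hmFnn : 0 ≤ mF := by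
    rw [hmF]; exact Real.iInf_nonneg fun v => Real.iInf_nonneg fun u => norm_nonneg _
  -- the supremum bounds each normalized difference
  have hβ_ge : ∀ (v : {v : H1 // v ≠ 0}) (u : H1),
      ‖(‖F' u (v : H1)‖)⁻¹ • F' u (v : H1) - (‖T (v : H1)‖)⁻¹ • T (v : H1)‖ ≤ βFT := by
    intro v u
    have hbound : ∀ (v' : {v : H1 // v ≠ 0}) (u' : H1),
        F' u' (v' : H1) ≠ 0 → T (v' : H1) ≠ 0 →
        ‖(‖F' u' (v' : H1)‖)⁻¹ • F' u' (v' : H1) - (‖T (v' : H1)‖)⁻¹ • T (v' : H1)‖ ≤ 2 := by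
      intro v' u' h1 h2
      have ha : ‖(‖F' u' (v' : H1)‖)⁻¹ • F' u' (v' : H1)‖ = 1 := by
        rw [norm_smul, norm_inv, norm_norm, inv_mul_cancel₀ (norm_ne_zero_iff.mpr h1)]
      have hb : ‖(‖T (v' : H1)‖)⁻¹ • T (v' : H1)‖ = 1 := by
        rw [norm_smul, norm_inv, norm_norm, inv_mul_cancel₀ (norm_ne_zero_iff.mpr h2)]
      calc _ ≤ _ + _ := norm_sub_le _ _
        _ = 2 := by rw [ha, hb]; norm_num
    have hFv' : ∀ (v' : {v : H1 // v ≠ 0}) (u' : H1), F' u' (v' : H1) ≠ 0 := by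
      intro v' u'
      have hvn : 0 < ‖(v' : H1)‖ := norm_pos_iff.mpr v'.2
      have h1 : 0 < A * ‖(v' : H1)‖ := mul_pos hA hvn
      have := (hstab u' (v' : H1)).1
      intro h; rw [h, norm_zero] at this; linarith
    have hTv' : ∀ (v' : {v : H1 // v ≠ 0}), T (v' : H1) ≠ 0 := by
      intro v'
      have hvn : 0 < ‖(v' : H1)‖ := norm_pos_iff.mpr v'.2
      have h1 : 0 < c * ‖(v' : H1)‖ := mul_pos hc hvn
      have := hcT (v' : H1)
      intro h; rw [h, norm_zero] at this; linarith
    rw [hβdef]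
    have step1 : ‖(‖F' u (v : H1)‖)⁻¹ • F' u (v : H1) - (‖T (v : H1)‖)⁻¹ • T (v : H1)‖ ≤
        ⨆ u' : H1, ‖(‖F' u' (v : H1)‖)⁻¹ • F' u' (v : H1) - (‖T (v : H1)‖)⁻¹ • T (v : H1)‖ := by
      apply le_ciSup ⟨2, ?_⟩ u
      rintro x ⟨u', rfl⟩
      exact hbound v u' (hFv' v u') (hTv' v)
    refine step1.trans ?_
    apply le_ciSup ⟨2, ?_⟩ v
    rintro x ⟨v', rfl⟩
    exact ciSup_le fun u' => hbound v' u' (hFv' v' u') (hTv' v')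
  -- pointwise lower bound for the bilinear pairing
  have key : ∀ (u w : H1),
      (2 - βFT ^ 2) / 2 * mT * mF * ‖w‖ ^ 2 ≤ ⟪T w, F' u w⟫ := by
    intro u w
    rcases eq_or_ne w 0 with rfl | hw0
    · simp
    have hw : 0 < ‖w‖ := norm_pos_iff.mpr hw0
    have hFw : 0 < ‖F' u w‖ := lt_of_lt_of_le (by positivity) (hstab u w).1
    have hTw : 0 < ‖T w‖ := lt_of_lt_of_le (by positivity) (hcT w)
    set a : H2 := (‖F' u w‖)⁻¹ • F' u w with ha_def
    set b : H2 := (‖T w‖)⁻¹ • T w with hb_def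
    have ha : ‖a‖ = 1 := by
      rw [ha_def, norm_smul, norm_inv, norm_norm, inv_mul_cancel₀ hFw.ne']
    have hb : ‖b‖ = 1 := by
      rw [hb_def, norm_smul, norm_inv, norm_norm, inv_mul_cancel₀ hTw.ne']
    have hab : ‖a - b‖ ≤ βFT := hβ_ge ⟨w, hw0⟩ u
    have habsq : ‖a - b‖ ^ 2 ≤ βFT ^ 2 := pow_le_pow_left₀ (norm_nonneg _) hab 2
    have hinner : 1 - βFT ^ 2 / 2 ≤ ⟪a, b⟫ := by
      have := norm_sub_sq_real a b
      rw [ha, hb] at this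
      nlinarith
    have hEq : ⟪T w, F' u w⟫ = ‖T w‖ * ‖F' u w‖ * ⟪a, b⟫ := by
      rw [ha_def, hb_def, real_inner_smul_left, real_inner_smul_right, real_inner_comm]
      field_simp
    -- norm lower bounds via the infima
    have hu0 : ‖(‖w‖⁻¹ • w)‖ = 1 := by
      rw [norm_smul, norm_inv, norm_norm, inv_mul_cancel₀ hw.ne']
    have hbb1 : BddBelow (Set.range fun u' : {u' : H1 // ‖u'‖ = 1} => ‖T (u' : H1)‖) := by
      refine ⟨0, ?_⟩
      rintro x ⟨u', rfl⟩
      exact norm_nonneg _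
    have hbb2 : BddBelow (Set.range fun v' : H1 =>
        ⨅ u' : {u' : H1 // ‖u'‖ = 1}, ‖F' v' (u' : H1)‖) := by
      refine ⟨0, ?_⟩
      rintro x ⟨v', rfl⟩
      exact Real.iInf_nonneg fun u' => norm_nonneg _
    have hbb3 : BddBelow (Set.range fun u' : {u' : H1 // ‖u'‖ = 1} => ‖F' u (u' : H1)‖) := by
      refine ⟨0, ?_⟩
      rintro x ⟨u', rfl⟩
      exact norm_nonneg _
    have hmT_le : mT * ‖w‖ ≤ ‖T w‖ := by
      have h1 : mT ≤ ‖T ((‖w‖⁻¹ • w : H1))‖ := by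
        rw [hmT]
        exact ciInf_le hbb1 ⟨‖w‖⁻¹ • w, hu0⟩
      rw [map_smul, norm_smul, norm_inv, norm_norm, inv_mul_eq_div, le_div_iff₀ hw] at h1
      exact h1
    have hmF_le : mF * ‖w‖ ≤ ‖F' u w‖ := by
      have h0 : mF ≤ ⨅ u' : {u' : H1 // ‖u'‖ = 1}, ‖F' u (u' : H1)‖ := by
        rw [hmF]
        exact ciInf_le hbb2 u
      have h1 : mF ≤ ‖F' u ((‖w‖⁻¹ • w : H1))‖ :=
        h0.trans (ciInf_le hbb3 ⟨‖w‖⁻¹ • w, hu0⟩)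
      rw [map_smul, norm_smul, norm_inv, norm_norm, inv_mul_eq_div, le_div_iff₀ hw] at h1
      exact h1
    have hcpos : (0:ℝ) ≤ 1 - βFT ^ 2 / 2 := by linarith
    have hprod : mT * ‖w‖ * (mF * ‖w‖) ≤ ‖T w‖ * ‖F' u w‖ :=
      mul_le_mul hmT_le hmF_le (by positivity) (norm_nonneg _)
    calc (2 - βFT ^ 2) / 2 * mT * mF * ‖w‖ ^ 2
        = (1 - βFT ^ 2 / 2) * (mT * ‖w‖ * (mF * ‖w‖)) := by ring
      _ ≤ (1 - βFT ^ 2 / 2) * (‖T w‖ * ‖F' u w‖) :=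
          mul_le_mul_of_nonneg_left hprod hcpos
      _ ≤ ⟪a, b⟫ * (‖T w‖ * ‖F' u w‖) := by
          apply mul_le_mul_of_nonneg_right hinner (by positivity)
      _ = ⟪T w, F' u w⟫ := by rw [hEq]; ring
  -- main inequality via the mean value theorem
  have main : ∀ v₁ v₂ : H1,
      (2 - βFT ^ 2) / 2 * mT * mF * ‖v₁ - v₂‖ ^ 2 ≤
        ⟪v₁ - v₂, (ContinuousLinearMap.adjoint T) (F v₁) - (ContinuousLinearMap.adjoint T) (F v₂)⟫ := by
    intro v₁ v₂
    set w : H1 := v₁ - v₂ with hw_def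
    set K : ℝ := (2 - βFT ^ 2) / 2 * mT * mF * ‖w‖ ^ 2 with hK_def
    set g : ℝ → ℝ := fun t => ⟪T w, F (v₂ + t • w)⟫ with hg_def
    have hline : ∀ t : ℝ, HasDerivAt (fun s : ℝ => v₂ + s • w) w t := by
      intro t
      have := ((hasDerivAt_id t).smul_const w).const_add v₂
      simpa using this
    have hg' : ∀ t : ℝ, HasDerivAt g ⟪T w, F' (v₂ + t • w) w⟫ t := by
      intro t
      have h1 : HasDerivAt (fun s : ℝ => F (v₂ + s • w)) (F' (v₂ + t • w) w) t :=
        (hF (v₂ + t • w)).comp_hasDerivAt t (hline t)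
      have h2 := (innerSL ℝ (T w)).hasFDerivAt.comp_hasDerivAt t h1
      exact h2
    have hgdiff : ∀ t : ℝ, DifferentiableAt ℝ g t := fun t => (hg' t).differentiableAt
    have hmvt := Convex.mul_sub_le_image_sub_of_le_deriv (convex_univ : Convex ℝ (Set.univ : Set ℝ))
      (fun t _ => (hgdiff t).continuousAt.continuousWithinAt)
      (by intro t _; exact (hgdiff t).differentiableWithinAt)
      (C := K) (by
        intro t _
        rw [(hg' t).deriv]
        exact key (v₂ + t • w) w)
      0 (Set.mem_univ 0) 1 (Set.mem_univ 1) zero_le_one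
    have hg1 : g 1 = ⟪T w, F v₁⟫ := by
      simp only [hg_def, one_smul, hw_def]
      congr 2
      abel
    have hg0 : g 0 = ⟪T w, F v₂⟫ := by simp [hg_def]
    have hrhs : ⟪w, (ContinuousLinearMap.adjoint T) (F v₁) - (ContinuousLinearMap.adjoint T) (F v₂)⟫
        = g 1 - g 0 := by
      rw [inner_sub_right, ContinuousLinearMap.adjoint_inner_right,
        ContinuousLinearMap.adjoint_inner_right, hg1, hg0]
    rw [hrhs]
    calc K = K * (1 - 0) := by ring
      _ ≤ g 1 - g 0 := hmvt
  refine ⟨main, ?_⟩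
  -- strict monotonicity
  have hBnorm : ∀ x : H1, ‖F' x‖ ≤ B := by
    intro x
    exact ContinuousLinearMap.opNorm_le_bound _ hB.le fun y => (hstab x y).2
  have hLip : ∀ v₁ v₂ : H1, ‖F v₁ - F v₂‖ ≤ B * ‖v₁ - v₂‖ := by
    intro v₁ v₂
    exact Convex.norm_image_sub_le_of_norm_hasFDerivWithin_le
      (fun x _ => (hF x).hasFDerivWithinAt) (fun x _ => hBnorm x) convex_univ
      (Set.mem_univ v₂) (Set.mem_univ v₁)
  have hupper : ∀ u v : H1,
      ⟪u - v, (ContinuousLinearMap.adjoint T) (F u) - (ContinuousLinearMap.adjoint T) (F v)⟫ ≤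
        (‖T‖ * B + 1) * ‖u - v‖ ^ 2 := by
    intro u v
    have h1 : ⟪u - v, (ContinuousLinearMap.adjoint T) (F u) - (ContinuousLinearMap.adjoint T) (F v)⟫
        = ⟪T (u - v), F u - F v⟫ := by
      rw [inner_sub_right, ContinuousLinearMap.adjoint_inner_right,
        ContinuousLinearMap.adjoint_inner_right, ← inner_sub_right]
    rw [h1]
    calc ⟪T (u - v), F u - F v⟫ ≤ ‖T (u - v)‖ * ‖F u - F v‖ := real_inner_le_norm _ _
      _ ≤ (‖T‖ * ‖u - v‖) * (B * ‖u - v‖) := by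
          apply mul_le_mul (T.le_opNorm _) (hLip u v) (norm_nonneg _) (by positivity)
      _ ≤ (‖T‖ * B + 1) * ‖u - v‖ ^ 2 := by nlinarith [norm_nonneg (u - v), sq_nonneg ‖u - v‖]
  have hMpos : 0 < ‖T‖ * B + 1 := by positivity
  by_cases hsub : ∀ x : H1, x = 0
  · -- trivial space
    refine ⟨1, ‖T‖ * B + 1, one_pos, hMpos, fun u v => ?_⟩
    have hu : u = 0 := hsub u
    have hv : v = 0 := hsub v
    subst hu; subst hv
    simp
  · push_neg at hsub
    obtain ⟨x, hx⟩ := hsub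
    have hxn : 0 < ‖x‖ := norm_pos_iff.mpr hx
    have x0 : {u : H1 // ‖u‖ = 1} := ⟨‖x‖⁻¹ • x,
      by rw [norm_smul, norm_inv, norm_norm, inv_mul_cancel₀ hxn.ne']⟩
    have hmTpos : 0 < mT := by
      rw [hmT]
      have : Nonempty {u : H1 // ‖u‖ = 1} := ⟨x0⟩
      apply lt_of_lt_of_le hc
      apply le_ciInf
      intro u
      have := hcT (u : H1)
      rw [u.2, mul_one] at this
      exact this
    have hmFpos : 0 < mF := by
      rw [hmF]
      have hne : Nonempty {u : H1 // ‖u‖ = 1} := ⟨x0⟩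
      apply lt_of_lt_of_le hA
      apply le_ciInf
      intro v
      apply le_ciInf
      intro u
      have := (hstab v (u : H1)).1
      rw [u.2, mul_one] at this
      exact this
    refine ⟨(2 - βFT ^ 2) / 2 * mT * mF, ‖T‖ * B + 1,
      mul_pos (mul_pos (by linarith : (0:ℝ) < (2 - βFT ^ 2) / 2) hmTpos) hmFpos,
      hMpos, fun u v => ?_⟩
    exact ⟨main u v, hupper u v⟩
end

section
/- Let H1, H2 be Hilbert spaces, F : H1 → H2 a differentiable map with continuous and uniformly stable derivative, and T ∈ B(H1,H2) bounded below with β_{F,T} := sup_{0≠v} sup_{u} ‖F'(u)v/‖F'(u)v‖ − Tv/‖Tv‖‖ < √2. Set m_T := inf_{‖u‖=1} ‖Tu‖, m_F := inf_{v∈H1} inf_{‖u‖=1} ‖F'(v)u‖, and M_F := sup_{v∈H1} ‖F'(v)‖. Suppose the relaxation factor μ satisfies 0 < μ < (2 − β_{F,T}²)·m_T·m_F/(‖T‖²·M_F²). Given u₀ ∈ H1, u⁰ ∈ H1, ε ∈ H2, set z_ε := F(u⁰) + ε and define uₙ₊₁ := uₙ − μT*(F(uₙ) − z_ε) for n ≥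 0, where T* is the adjoint of T. Then uₙ converges exponentially to some u_∞ ∈ H1 satisfying ‖u_∞ − u⁰‖ ≤ (2‖T‖/((2 − β_{F,T}²)·m_T·m_F))·‖ε‖. -/
set_option maxHeartbeats 2000000
local notation "⟪" x ", " y "⟫_ℝ" => @inner ℝ _ _ x y

/-- Exponential convergence of the Van-Cittert type algorithm
`uₙ₊₁ = uₙ − μ T*(F(uₙ) − z_ε)` in Hilbert spaces, when `β_{F,T} < √2` and
`0 < μ < (2−β²)·m_T·m_F/(‖T‖²·M_F²)`, with suboptimal limit
`‖u_∞ − u⁰‖ ≤ (2‖T‖/((2−β²)·m_T·m_F))·‖ε‖`. -/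
theorem hilbert_van_cittert_algorithm
    {H1 H2 : Type*} [NormedAddCommGroup H1] [InnerProductSpace ℝ H1] [CompleteSpace H1]
    [NormedAddCommGroup H2] [InnerProductSpace ℝ H2] [CompleteSpace H2]
    (F : H1 → H2) (F' : H1 → H1 →L[ℝ] H2)
    (hF : ∀ x : H1, HasFDerivAt F (F' x) x)
    (hF'cont : Continuous F')
    (A B : ℝ) (hA : 0 < A) (hB : 0 < B)
    (hstab : ∀ x y : H1, A * ‖y‖ ≤ ‖F' x y‖ ∧ ‖F' x y‖ ≤ B * ‖y‖)
    (T : H1 →L[ℝ] H2)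
    (hTbb : ∃ c > 0, ∀ y : H1, c * ‖y‖ ≤ ‖T y‖)
    (βFT mT mF MF : ℝ)
    (hβdef : βFT = ⨆ v : {v : H1 // v ≠ 0}, ⨆ u : H1,
        ‖(‖F' u (v : H1)‖)⁻¹ • F' u (v : H1) - (‖T (v : H1)‖)⁻¹ • T (v : H1)‖)
    (hβ : βFT < Real.sqrt 2)
    (hmT : mT = ⨅ u : {u : H1 // ‖u‖ = 1}, ‖T (u : H1)‖)
    (hmF : mF = ⨅ v : H1, ⨅ u : {u : H1 // ‖u‖ = 1}, ‖F' v (u : H1)‖)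
    (hMF : MF = ⨆ v : H1, ‖F' v‖)
    (μ : ℝ) (hμ0 : 0 < μ) (hμlt : μ < (2 - βFT ^ 2) * mT * mF / (‖T‖ ^ 2 * MF ^ 2))
    (u₀ uref : H1) (ε : H2)
    (useq : ℕ → H1) (hu0 : useq 0 = u₀)
    (hrec : ∀ n : ℕ,
      useq (n + 1) = useq n - μ • (ContinuousLinearMap.adjoint T) (F (useq n) - (F uref + ε))) :
    ∃ uinf : H1, ∃ C r : ℝ, 0 < C ∧ 0 < r ∧ r < 1 ∧
      (∀ n : ℕ, ‖useq n - uinf‖ ≤ C * r ^ n) ∧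
      ‖uinf - uref‖ ≤ 2 * ‖T‖ / ((2 - βFT ^ 2) * mT * mF) * ‖ε‖ := by
  rcases subsingleton_or_nontrivial H1 with hsub | hnt
  · -- trivial case : H1 has one point
    refine ⟨u₀, 1, 1/2, one_pos, by norm_num, by norm_num, ?_, ?_⟩
    · intro n
      have h0 : useq n - u₀ = 0 := Subsingleton.elim _ _
      rw [h0, norm_zero]; positivity
    · have h0 : u₀ - uref = (0 : H1) := Subsingleton.elim _ _
      have hmT0 : mT = 0 := by
        have he : IsEmpty {u : H1 // ‖u‖ = 1} := by
          refine ⟨fun u => ?_⟩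
          have h1 : (u : H1) = 0 := Subsingleton.elim _ _
          have h2 := u.2
          rw [h1, norm_zero] at h2
          norm_num at h2
        rw [hmT]
        rw [Real.iInf_of_isEmpty]
      rw [h0, norm_zero, hmT0]
      simp
  · classical
    obtain ⟨c, hc, hcT⟩ := hTbb
    obtain ⟨e, he⟩ := exists_norm_eq H1 (zero_le_one)
    have hsphne : Nonempty {u : H1 // ‖u‖ = 1} := ⟨⟨e, he⟩⟩
    set Ts := ContinuousLinearMap.adjoint T with hTs
    set z : H2 := F uref + ε with hz
    set g : H1 → H1 := fun u => u - μ • Ts (F u - z) with hg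
    -- unit vectors have norm ≤ 1 after normalization
    have keyn : ∀ (w : H2), ‖(‖w‖)⁻¹ • w‖ ≤ 1 := by
      intro w
      rcases eq_or_ne w 0 with rfl | hw
      · simp
      · rw [norm_smul, norm_inv, norm_norm, inv_mul_cancel₀ (norm_ne_zero_iff.2 hw)]
    -- each normalized difference is ≤ βFT
    have hβmem : ∀ (v : H1), v ≠ 0 → ∀ u : H1,
        ‖(‖F' u v‖)⁻¹ • F' u v - (‖T v‖)⁻¹ • T v‖ ≤ βFT := by
      intro v hv u
      rw [hβdef]
      have hb2 : ∀ (v' : {v : H1 // v ≠ 0}) (u' : H1),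
          ‖(‖F' u' (v' : H1)‖)⁻¹ • F' u' (v' : H1) - (‖T (v' : H1)‖)⁻¹ • T (v' : H1)‖ ≤ 2 := by
        intro v' u'
        refine (norm_sub_le _ _).trans ?_
        have := keyn (F' u' (v' : H1)); have := keyn (T (v' : H1)); linarith [keyn (F' u' (v' : H1)), keyn (T (v' : H1))]
      have hbddin : BddAbove (Set.range fun u' : H1 =>
          ‖(‖F' u' v‖)⁻¹ • F' u' v - (‖T v‖)⁻¹ • T v‖) :=
        ⟨2, Set.forall_mem_range.2 fun u' => hb2 ⟨v, hv⟩ u'⟩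
      have h1 : ‖(‖F' u v‖)⁻¹ • F' u v - (‖T v‖)⁻¹ • T v‖ ≤
          ⨆ u' : H1, ‖(‖F' u' v‖)⁻¹ • F' u' v - (‖T v‖)⁻¹ • T v‖ := le_ciSup hbddin u
      refine h1.trans ?_
      have hbddout : BddAbove (Set.range fun v' : {v : H1 // v ≠ 0} => ⨆ u' : H1,
          ‖(‖F' u' (v' : H1)‖)⁻¹ • F' u' (v' : H1) - (‖T (v' : H1)‖)⁻¹ • T (v' : H1)‖) :=
        ⟨2, Set.forall_mem_range.2 fun v' => ciSup_le fun u' => hb2 v' u'⟩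
      exact le_ciSup hbddout ⟨v, hv⟩
    have hβ0 : 0 ≤ βFT := le_trans (norm_nonneg _) (hβmem e (by simp [← norm_ne_zero_iff, he]) 0)
    have hβ2 : βFT ^ 2 < 2 := by
      have := (Real.lt_sqrt hβ0).1 hβ
      simpa using this
    -- mT
    have hmTc : c ≤ mT := by
      rw [hmT]
      exact le_ciInf fun u => by simpa [u.2] using hcT (u : H1)
    have hmTpos : 0 < mT := lt_of_lt_of_le hc hmTc
    have hmT_le : ∀ h : H1, mT * ‖h‖ ≤ ‖T h‖ := by
      intro h
      rcases eq_or_ne h 0 with rfl | hh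
      · simp
      · have hn : ‖h‖ ≠ 0 := norm_ne_zero_iff.2 hh
        have hmem : ‖(‖h‖⁻¹ • h : H1)‖ = 1 := by
          rw [norm_smul, norm_inv, norm_norm, inv_mul_cancel₀ hn]
        have h1 : mT ≤ ‖T (‖h‖⁻¹ • h)‖ := by
          rw [hmT]
          have hbb : BddBelow (Set.range fun u : {u : H1 // ‖u‖ = 1} => ‖T (u : H1)‖) :=
            ⟨0, Set.forall_mem_range.2 fun _ => norm_nonneg _⟩
          exact ciInf_le hbb ⟨_, hmem⟩
        rw [map_smul, norm_smul, norm_inv, norm_norm] at h1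
        rw [mul_comm]
        calc ‖h‖ * mT ≤ ‖h‖ * (‖h‖⁻¹ * ‖T h‖) := by
              exact mul_le_mul_of_nonneg_left h1 (norm_nonneg _)
          _ = ‖T h‖ := by field_simp
    -- mF
    have hmFA : A ≤ mF := by
      rw [hmF]
      refine le_ciInf fun v => le_ciInf fun u => ?_
      simpa [u.2] using (hstab v (u : H1)).1
    have hmFpos : 0 < mF := lt_of_lt_of_le hA hmFA
    have hmF_le : ∀ x h : H1, mF * ‖h‖ ≤ ‖F' x h‖ := by
      intro x h
      rcases eq_or_ne h 0 with rfl | hh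
      · simp
      · have hn : ‖h‖ ≠ 0 := norm_ne_zero_iff.2 hh
        have hmem : ‖(‖h‖⁻¹ • h : H1)‖ = 1 := by
          rw [norm_smul, norm_inv, norm_norm, inv_mul_cancel₀ hn]
        have h0 : mF ≤ ⨅ u : {u : H1 // ‖u‖ = 1}, ‖F' x (u : H1)‖ := by
          rw [hmF]
          refine ciInf_le ⟨0, Set.forall_mem_range.2 fun v => ?_⟩ x
          exact le_ciInf fun u => norm_nonneg _
        have h1 : mF ≤ ‖F' x (‖h‖⁻¹ • h)‖ :=
          h0.trans (ciInf_le (f := fun u : {u : H1 // ‖u‖ = 1} => ‖F' x (u : H1)‖) ⟨0, Set.forall_mem_range.2 fun _ => norm_nonneg _⟩ ⟨_, hmem⟩)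
        rw [map_smul, norm_smul, norm_inv, norm_norm] at h1
        rw [mul_comm]
        calc ‖h‖ * mF ≤ ‖h‖ * (‖h‖⁻¹ * ‖F' x h‖) := mul_le_mul_of_nonneg_left h1 (norm_nonneg _)
          _ = ‖F' x h‖ := by field_simp
    -- MF
    have hMF_ge : ∀ x : H1, ‖F' x‖ ≤ MF := by
      intro x
      rw [hMF]
      exact le_ciSup ⟨B, Set.forall_mem_range.2 fun v =>
        ContinuousLinearMap.opNorm_le_bound _ hB.le fun y => (hstab v y).2⟩ x
    have hMFA : A ≤ MF := by
      have h1 : A ≤ ‖F' u₀ e‖ := by simpa [he] using (hstab u₀ e).1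
      have h2 : ‖F' u₀ e‖ ≤ ‖F' u₀‖ := by
        simpa [he] using (F' u₀).le_opNorm e
      linarith [hMF_ge u₀]
    have hMFpos : 0 < MF := lt_of_lt_of_le hA hMFA
    have hTpos : 0 < ‖T‖ := by
      have h1 : c ≤ ‖T e‖ := by simpa [he] using hcT e
      have h2 : ‖T e‖ ≤ ‖T‖ := by simpa [he] using T.le_opNorm e
      linarith
    -- key inner-product lower bound
    set γ : ℝ := (2 - βFT ^ 2) / 2 * (mT * mF) with hγ
    have hγpos : 0 < γ := by
      have : 0 < 2 - βFT ^ 2 := by linarith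
      positivity
    have hinner : ∀ (x h : H1), γ * ‖h‖ ^ 2 ≤ ⟪T h, F' x h⟫_ℝ := by
      intro x h
      rcases eq_or_ne h 0 with rfl | hh
      · simp
      · have hh' : 0 < ‖h‖ := norm_pos_iff.2 hh
        have hw : F' x h ≠ 0 := by
          rw [← norm_pos_iff]
          have h0 : 0 < A * ‖h‖ := by positivity
          linarith [(hstab x h).1]
        have hs : T h ≠ 0 := by
          rw [← norm_pos_iff]
          have h0 : 0 < c * ‖h‖ := by positivity
          linarith [hcT h]
        set a : H2 := (‖F' x h‖)⁻¹ • F' x h with ha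
        set b : H2 := (‖T h‖)⁻¹ • T h with hb
        have hna : ‖a‖ = 1 := by
          rw [ha, norm_smul, norm_inv, norm_norm, inv_mul_cancel₀ (norm_ne_zero_iff.2 hw)]
        have hnb : ‖b‖ = 1 := by
          rw [hb, norm_smul, norm_inv, norm_norm, inv_mul_cancel₀ (norm_ne_zero_iff.2 hs)]
        have hab : ‖a - b‖ ≤ βFT := hβmem h hh x
        have habsq : ‖a - b‖ ^ 2 ≤ βFT ^ 2 := by
          exact pow_le_pow_left₀ (norm_nonneg _) hab 2
        have hexp : ‖a - b‖ ^ 2 = 2 - 2 * ⟪a, b⟫_ℝ := by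
          rw [@norm_sub_sq_real, hna, hnb]; ring
        have hip : (2 - βFT ^ 2) / 2 ≤ ⟪a, b⟫_ℝ := by
          rw [hexp] at habsq; linarith
        have hTh : T h = ‖T h‖ • b := by
          rw [hb, smul_smul, mul_inv_cancel₀ (norm_ne_zero_iff.2 hs), one_smul]
        have hFh : F' x h = ‖F' x h‖ • a := by
          rw [ha, smul_smul, mul_inv_cancel₀ (norm_ne_zero_iff.2 hw), one_smul]
        have hco : ⟪b, a⟫_ℝ = ⟪a, b⟫_ℝ := real_inner_comm _ _
        have hsw : ⟪T h, F' x h⟫_ℝ = ‖T h‖ * (‖F' x h‖ * ⟪a, b⟫_ℝ) := by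
          conv_lhs => rw [hTh, hFh]
          rw [real_inner_smul_left, real_inner_smul_right, hco]
        rw [hsw]
        have h1 : mT * ‖h‖ ≤ ‖T h‖ := hmT_le h
        have h2 : mF * ‖h‖ ≤ ‖F' x h‖ := hmF_le x h
        have h4 : 0 ≤ mF * ‖h‖ := by positivity
        have h5 : (0:ℝ) < (2 - βFT ^ 2) / 2 := by linarith
        have step1 : (mT * ‖h‖) * (mF * ‖h‖) ≤ ‖T h‖ * ‖F' x h‖ :=
          mul_le_mul h1 h2 h4 (norm_nonneg (T h))
        calc γ * ‖h‖ ^ 2 = (2 - βFT ^ 2) / 2 * ((mT * ‖h‖) * (mF * ‖h‖)) := by rw [hγ]; ring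
          _ ≤ (2 - βFT ^ 2) / 2 * (‖T h‖ * ‖F' x h‖) := mul_le_mul_of_nonneg_left step1 h5.le
          _ ≤ ⟪a, b⟫_ℝ * (‖T h‖ * ‖F' x h‖) :=
              mul_le_mul_of_nonneg_right hip (by positivity)
          _ = ‖T h‖ * (‖F' x h‖ * ⟪a, b⟫_ℝ) := by ring
    -- derivative of g
    have hg' : ∀ x : H1, HasFDerivAt g
        (ContinuousLinearMap.id ℝ H1 - μ • (Ts.comp (F' x))) x := by
      intro x
      have h1 : HasFDerivAt (fun u : H1 => Ts (F u - z)) (Ts.comp (F' x)) x :=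
        (Ts.hasFDerivAt).comp x ((hF x).sub_const z)
      exact (hasFDerivAt_id x).sub (h1.const_smul μ)
    set K : ℝ := 1 - 2 * μ * γ + μ ^ 2 * ‖T‖ ^ 2 * MF ^ 2 with hKdef
    have hTsnorm : ‖Ts‖ = ‖T‖ := by
      rw [hTs]
      exact ContinuousLinearMap.adjoint.norm_map T
    have hKbound : ∀ (x h : H1),
        ‖(ContinuousLinearMap.id ℝ H1 - μ • (Ts.comp (F' x))) h‖ ^ 2 ≤ K * ‖h‖ ^ 2 := by
      intro x h
      have happ : (ContinuousLinearMap.id ℝ H1 - μ • (Ts.comp (F' x))) h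
          = h - μ • Ts (F' x h) := by
        simp [ContinuousLinearMap.sub_apply, ContinuousLinearMap.smul_apply,
          ContinuousLinearMap.comp_apply]
      rw [happ]
      have hadj : ⟪h, Ts (F' x h)⟫_ℝ = ⟪T h, F' x h⟫_ℝ := by
        rw [hTs]
        exact ContinuousLinearMap.adjoint_inner_right T h (F' x h)
      have hexp : ‖h - μ • Ts (F' x h)‖ ^ 2
          = ‖h‖ ^ 2 - 2 * (μ * ⟪T h, F' x h⟫_ℝ) + ‖μ • Ts (F' x h)‖ ^ 2 := by
        rw [@norm_sub_sq_real, real_inner_smul_right, hadj]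
      have hnb : ‖μ • Ts (F' x h)‖ ≤ μ * (‖T‖ * (MF * ‖h‖)) := by
        rw [norm_smul, Real.norm_of_nonneg hμ0.le]
        refine mul_le_mul_of_nonneg_left ?_ hμ0.le
        calc ‖Ts (F' x h)‖ ≤ ‖Ts‖ * ‖F' x h‖ := Ts.le_opNorm _
          _ ≤ ‖T‖ * (MF * ‖h‖) := by
            rw [hTsnorm]
            refine mul_le_mul_of_nonneg_left ?_ (norm_nonneg T)
            calc ‖F' x h‖ ≤ ‖F' x‖ * ‖h‖ := (F' x).le_opNorm h
              _ ≤ MF * ‖h‖ := mul_le_mul_of_nonneg_right (hMF_ge x) (norm_nonneg h)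
      have hsq : ‖μ • Ts (F' x h)‖ ^ 2 ≤ μ ^ 2 * ‖T‖ ^ 2 * MF ^ 2 * ‖h‖ ^ 2 := by
        calc ‖μ • Ts (F' x h)‖ ^ 2 ≤ (μ * (‖T‖ * (MF * ‖h‖))) ^ 2 :=
              pow_le_pow_left₀ (norm_nonneg _) hnb 2
          _ = μ ^ 2 * ‖T‖ ^ 2 * MF ^ 2 * ‖h‖ ^ 2 := by ring
      have hin : μ * (γ * ‖h‖ ^ 2) ≤ μ * ⟪T h, F' x h⟫_ℝ :=
        mul_le_mul_of_nonneg_left (hinner x h) hμ0.le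
      rw [hexp, hKdef]
      linarith [hin, hsq]
    have hKlt : K < 1 := by
      have hden : 0 < ‖T‖ ^ 2 * MF ^ 2 := by positivity
      have hμ2 : μ * (‖T‖ ^ 2 * MF ^ 2) < (2 - βFT ^ 2) * mT * mF := (lt_div_iff₀ hden).1 hμlt
      have h2γ : 2 * γ = (2 - βFT ^ 2) * mT * mF := by rw [hγ]; ring
      have h8 := mul_lt_mul_of_pos_left hμ2 hμ0
      have h2γμ : μ * (2 * γ) = μ * ((2 - βFT ^ 2) * mT * mF) := by rw [h2γ]
      rw [hKdef]
      linarith [h8, h2γμ]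
    have hK0 : 0 ≤ K := by
      have h1 := hKbound u₀ e
      rw [he] at h1
      have h2 : (0:ℝ) ≤ ‖(ContinuousLinearMap.id ℝ H1 - μ • (Ts.comp (F' u₀))) e‖ ^ 2 :=
        pow_nonneg (norm_nonneg _) 2
      rw [one_pow, mul_one] at h1
      exact le_trans h2 h1
    set r : ℝ := max (Real.sqrt K) (1/2) with hr
    have hr0 : 0 < r := lt_max_of_lt_right one_half_pos
    have hrlt1 : r < 1 := by
      apply max_lt _ (by norm_num)
      rw [Real.sqrt_lt' one_pos]
      simpa using hKlt
    have hKr : K ≤ r ^ 2 := by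
      have h1 : Real.sqrt K ≤ r := le_max_left _ _
      calc K = Real.sqrt K ^ 2 := (Real.sq_sqrt hK0).symm
        _ ≤ r ^ 2 := pow_le_pow_left₀ (Real.sqrt_nonneg K) h1 2
    have hopnorm : ∀ x : H1, ‖ContinuousLinearMap.id ℝ H1 - μ • (Ts.comp (F' x))‖ ≤ r := by
      intro x
      refine ContinuousLinearMap.opNorm_le_bound _ hr0.le fun h => ?_
      have h1 := hKbound x h
      have h2 : ‖(ContinuousLinearMap.id ℝ H1 - μ • (Ts.comp (F' x))) h‖ ^ 2 ≤ (r * ‖h‖) ^ 2 := by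
        linarith [h1, mul_le_mul_of_nonneg_right hKr (sq_nonneg ‖h‖)]
      have h3 : (0:ℝ) ≤ r * ‖h‖ := by positivity
      calc ‖(ContinuousLinearMap.id ℝ H1 - μ • (Ts.comp (F' x))) h‖
          = Real.sqrt (‖(ContinuousLinearMap.id ℝ H1 - μ • (Ts.comp (F' x))) h‖ ^ 2) :=
            (Real.sqrt_sq (norm_nonneg _)).symm
        _ ≤ Real.sqrt ((r * ‖h‖) ^ 2) := Real.sqrt_le_sqrt h2
        _ = r * ‖h‖ := Real.sqrt_sq h3
    have hlip : LipschitzWith r.toNNReal g := by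
      rw [← lipschitzOnWith_univ]
      refine Convex.lipschitzOnWith_of_nnnorm_hasFDerivWithin_le
        (f' := fun x => ContinuousLinearMap.id ℝ H1 - μ • (Ts.comp (F' x)))
        (fun x _ => (hg' x).hasFDerivWithinAt) (fun x _ => ?_) convex_univ
      rw [← NNReal.coe_le_coe, coe_nnnorm, Real.coe_toNNReal _ hr0.le]
      exact hopnorm x
    have hK1 : r.toNNReal < 1 := by
      rw [← NNReal.coe_lt_coe, Real.coe_toNNReal _ hr0.le, NNReal.coe_one]
      exact hrlt1
    have hcontr : ContractingWith r.toNNReal g := ⟨hK1, hlip⟩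
    have hiter : ∀ n, useq n = g^[n] u₀ := by
      intro n
      induction n with
      | zero => simpa using hu0
      | succ n ih =>
        rw [Function.iterate_succ_apply', ← ih, hrec n]
    set uinf : H1 := ContractingWith.fixedPoint g hcontr with huinf
    have hfix : g uinf = uinf := hcontr.fixedPoint_isFixedPt
    set C : ℝ := dist u₀ (g u₀) / (1 - r) + 1 with hC
    have hC0 : 0 < C := by
      have h1 : (0:ℝ) ≤ dist u₀ (g u₀) / (1 - r) :=
        div_nonneg dist_nonneg (by linarith)
      rw [hC]; linarith
    have hexpconv : ∀ n : ℕ, ‖useq n - uinf‖ ≤ C * r ^ n := by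
      intro n
      have h1 := hcontr.apriori_dist_iterate_fixedPoint_le u₀ n
      rw [Real.coe_toNNReal _ hr0.le] at h1
      have h2 : ‖useq n - uinf‖ = dist (g^[n] u₀) uinf := by
        rw [hiter n, dist_eq_norm]
      rw [h2]
      refine h1.trans ?_
      have h3 : (0:ℝ) ≤ r ^ n := by positivity
      have h4 : dist u₀ (g u₀) * r ^ n / (1 - r) = (dist u₀ (g u₀) / (1 - r)) * r ^ n := by
        ring
      rw [h4, hC]
      linarith [h3]
    -- the fixed point equation
    have hTs0 : Ts (F uinf - z) = 0 := by
      have h1 : uinf - μ • Ts (F uinf - z) = uinf := hfix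
      have h2 : μ • Ts (F uinf - z) = 0 := sub_eq_self.1 h1
      exact (smul_eq_zero.1 h2).resolve_left hμ0.ne'
    -- final estimate
    set d : H1 := uinf - uref with hd
    set φ : ℝ → ℝ := fun t => ⟪T d, F (uref + t • d)⟫_ℝ - γ * ‖d‖ ^ 2 * t with hφ
    have hφ' : ∀ t : ℝ, HasDerivAt φ (⟪T d, F' (uref + t • d) d⟫_ℝ - γ * ‖d‖ ^ 2) t := by
      intro t
      have hc2 : HasDerivAt (fun t : ℝ => uref + t • d) d t := by
        simpa using ((hasDerivAt_id t).smul_const d).const_add uref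
      have hFc : HasDerivAt (fun t : ℝ => F (uref + t • d)) (F' (uref + t • d) d) t :=
        (hF _).comp_hasDerivAt t hc2
      have hin : HasDerivAt (fun t : ℝ => ⟪T d, F (uref + t • d)⟫_ℝ)
          (⟪T d, F' (uref + t • d) d⟫_ℝ) t := by
        have h5 := ((innerSL ℝ (T d)).hasFDerivAt).comp_hasDerivAt t hFc
        exact h5
      have hlin : HasDerivAt (fun t : ℝ => γ * ‖d‖ ^ 2 * t) (γ * ‖d‖ ^ 2) t := by
        simpa using (hasDerivAt_id t).const_mul (γ * ‖d‖ ^ 2)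
      exact hin.sub hlin
    have hmono : Monotone φ :=
      monotone_of_hasDerivAt_nonneg hφ'
        (Pi.le_def.2 fun t => sub_nonneg.2 (hinner _ d))
    have h01 := hmono (by norm_num : (0:ℝ) ≤ 1)
    have hrefd : uref + d = uinf := by rw [hd]; abel
    have hphi0 : φ 0 = ⟪T d, F uref⟫_ℝ := by simp [hφ]
    have hphi1 : φ 1 = ⟪T d, F uinf⟫_ℝ - γ * ‖d‖ ^ 2 := by
      rw [hφ]
      simp only [one_smul, mul_one, hrefd]
    have hkey : γ * ‖d‖ ^ 2 ≤ ⟪T d, F uinf - F uref⟫_ℝ := by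
      rw [hphi0, hphi1] at h01
      rw [inner_sub_right]
      linarith
    have hzero : ⟪T d, F uinf - z⟫_ℝ = 0 := by
      have h5 : ⟪d, Ts (F uinf - z)⟫_ℝ = ⟪T d, F uinf - z⟫_ℝ := by
        rw [hTs]
        exact ContinuousLinearMap.adjoint_inner_right T d (F uinf - z)
      rw [← h5, hTs0, inner_zero_right]
    have hsplit : F uinf - F uref = (F uinf - z) + ε := by rw [hz]; abel
    have hfin : γ * ‖d‖ ^ 2 ≤ ‖T‖ * ‖d‖ * ‖ε‖ := by
      have h2 : ⟪T d, F uinf - F uref⟫_ℝ = ⟪T d, ε⟫_ℝ := by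
        rw [hsplit, inner_add_right, hzero, zero_add]
      have h3 : ⟪T d, ε⟫_ℝ ≤ ‖T d‖ * ‖ε‖ := real_inner_le_norm _ _
      have h4 : ‖T d‖ ≤ ‖T‖ * ‖d‖ := T.le_opNorm d
      have h6 := hkey
      rw [h2] at h6
      have h7 : ‖T d‖ * ‖ε‖ ≤ ‖T‖ * ‖d‖ * ‖ε‖ := mul_le_mul_of_nonneg_right h4 (norm_nonneg ε)
      linarith [h6, h3, h7]
    refine ⟨uinf, C, r, hC0, hr0, hrlt1, hexpconv, ?_⟩
    have hden : 0 < (2 - βFT ^ 2) * mT * mF := by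
      have h2 : 0 < 2 - βFT ^ 2 := by linarith
      positivity
    rw [div_mul_eq_mul_div, le_div_iff₀ hden]
    have hdnorm : ‖uinf - uref‖ = ‖d‖ := by rw [hd]
    rw [hdnorm]
    rcases eq_or_ne d 0 with hd0 | hd0
    · rw [hd0, norm_zero, zero_mul]
      positivity
    · have hd0' : 0 < ‖d‖ := norm_pos_iff.2 hd0
      have hD : (2 - βFT ^ 2) * mT * mF = 2 * γ := by rw [hγ]; ring
      rw [hD]
      by_contra hcon
      push_neg at hcon
      have h7 : 2 * ‖T‖ * ‖ε‖ * ‖d‖ < ‖d‖ * (2 * γ) * ‖d‖ :=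
        mul_lt_mul_of_pos_right hcon hd0'
      linarith [hfin, h7]
end

section
/- Let 𝒜 be a unital Banach algebra with norm ‖·‖, let θ ∈ (0,1], D > 0, and let p : 𝒜 → [0,∞) be a submultiplicative function (p(ST) ≤ p(S)p(T) for all S, T ∈ 𝒜) such that ‖T₁T₂‖ ≤ D‖T₁‖‖T₂‖((p(T₁)/‖T₁‖)^θ + (p(T₂)/‖T₂‖)^θ) for all nonzero T₁, T₂ ∈ 𝒜. Let (Tₙ)_{n≥1} be a sequence in 𝒜 and r ∈ [0,1), M > 0 with p(Tₙ) ≤ r and ‖Tₙ‖ ≤ M for all n ≥ 1. Then for every r₁ ∈ (r,1) there exists a constant C > 0 such that sup_{l≥1} ‖T_{l+n−1}T_{l+n−2}⋯T_l‖ ≤ C·r₁ⁿ for all n ≥ 1. -/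
def Pprod {A : Type*} [Monoid A] (T : ℕ → A) (l n : ℕ) : A :=
  (((List.range n).map fun k => T (l + k)).reverse).prod

theorem Pprod_add {A : Type*} [Monoid A] (T : ℕ → A) (l n m : ℕ) :
    Pprod T l (n + m) = Pprod T (l + n) m * Pprod T l n := by
  unfold Pprod
  rw [List.range_add, List.map_append, List.reverse_append, List.prod_append, List.map_map]
  congr 3
  apply List.map_congr_left
  intro k _
  simp [Function.comp, Nat.add_assoc]

theorem Pprod_one {A : Type*} [Monoid A] (T : ℕ → A) (l : ℕ) : Pprod T l 1 = T l := by
  simp [Pprod, List.range_succ]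

theorem Pprod_zero {A : Type*} [Monoid A] (T : ℕ → A) (l : ℕ) : Pprod T l 0 = 1 := by
  simp [Pprod]

noncomputable def Aseq (D θ r M₁ : ℝ) : ℕ → ℝ
  | 0 => M₁
  | k + 1 => 2 * D * (Aseq D θ r M₁ k) ^ (1 - θ) * (Aseq D θ r M₁ k) * ((r ^ (2 ^ k)) ^ θ)

theorem rpow_pow_comm (x : ℝ) (hx : 0 ≤ x) (θ : ℝ) (n : ℕ) : (x ^ n) ^ θ = (x ^ θ) ^ n := by
  rw [← Real.rpow_natCast x n, ← Real.rpow_natCast (x ^ θ) n, ← Real.rpow_mul hx,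
    ← Real.rpow_mul hx, mul_comm]

/-- In a unital Banach algebra `𝒜` which is a differential subalgebra of order
`θ ∈ (0,1]` with respect to a submultiplicative seminorm-like function `p`, any sequence `(Tₙ)`
with `p(Tₙ) ≤ r < 1` and `‖Tₙ‖ ≤ M` has products decaying exponentially: for every `r₁ ∈ (r,1)`
there is `C > 0` with `‖T_{l+n−1}·T_{l+n−2}⋯T_l‖ ≤ C·r₁ⁿ` for all `n, l ≥ 1`. -/
theorem differential_subalgebra_product_decay
    {𝒜 : Type*} [NormedRing 𝒜] [NormOneClass 𝒜] [CompleteSpace 𝒜]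
    (p : 𝒜 → ℝ) (hp0 : ∀ S : 𝒜, 0 ≤ p S)
    (hpmul : ∀ S T : 𝒜, p (S * T) ≤ p S * p T)
    (θ D : ℝ) (hθ0 : 0 < θ) (hθ1 : θ ≤ 1) (hD : 0 < D)
    (hdiff : ∀ T₁ T₂ : 𝒜, T₁ ≠ 0 → T₂ ≠ 0 →
      ‖T₁ * T₂‖ ≤ D * ‖T₁‖ * ‖T₂‖ * ((p T₁ / ‖T₁‖) ^ θ + (p T₂ / ‖T₂‖) ^ θ))
    (T : ℕ → 𝒜) (r M : ℝ) (hr0 : 0 ≤ r) (hr1 : r < 1) (hM : 0 < M)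
    (hpT : ∀ n : ℕ, 1 ≤ n → p (T n) ≤ r)
    (hTM : ∀ n : ℕ, 1 ≤ n → ‖T n‖ ≤ M)
    (r₁ : ℝ) (hrr₁ : r < r₁) (hr₁1 : r₁ < 1) :
    ∃ C > 0, ∀ n l : ℕ, 1 ≤ n → 1 ≤ l →
      ‖(((List.range n).map fun k => T (l + k)).reverse).prod‖ ≤ C * r₁ ^ n := by
  have hr₁0 : 0 < r₁ := lt_of_le_of_lt hr0 hrr₁
  set M₁ : ℝ := max M 1 with hM₁def
  have hM₁1 : 1 ≤ M₁ := le_max_right _ _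
  have hM₁0 : 0 < M₁ := lt_of_lt_of_le one_pos hM₁1
  have hMM₁ : M ≤ M₁ := le_max_left _ _
  set A : ℕ → ℝ := Aseq D θ r M₁ with hAdef
  -- norm bound on products
  have hPnorm : ∀ n l : ℕ, 1 ≤ l → ‖Pprod T l n‖ ≤ M₁ ^ n := by
    intro n
    induction n with
    | zero => intro l hl; simp [Pprod_zero]
    | succ n ih =>
      intro l hl
      rw [Pprod_add T l n 1, Pprod_one]
      calc ‖T (l + n) * Pprod T l n‖ ≤ ‖T (l + n)‖ * ‖Pprod T l n‖ := norm_mul_le _ _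
        _ ≤ M₁ * M₁ ^ n := by
            apply mul_le_mul (le_trans (hTM _ (by omega)) hMM₁) (ih l hl) (norm_nonneg _)
              (le_of_lt hM₁0)
        _ = M₁ ^ (n + 1) := (pow_succ' M₁ n).symm
  -- p bound on products
  have hPp : ∀ n : ℕ, 1 ≤ n → ∀ l : ℕ, 1 ≤ l → p (Pprod T l n) ≤ r ^ n := by
    intro n hn
    induction n, hn using Nat.le_induction with
    | base => intro l hl; rw [Pprod_one, pow_one]; exact hpT l hl
    | succ n hn ih =>
      intro l hl
      rw [Pprod_add T l n 1, Pprod_one]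
      calc p (T (l + n) * Pprod T l n) ≤ p (T (l + n)) * p (Pprod T l n) := hpmul _ _
        _ ≤ r * r ^ n := mul_le_mul (hpT _ (by omega)) (ih l hl) (hp0 _) hr0
        _ = r ^ (n + 1) := (pow_succ' r n).symm
  -- A is nonnegative
  have hA0 : ∀ k, 0 ≤ A k := by
    intro k
    induction k with
    | zero => exact le_of_lt hM₁0
    | succ k ih =>
      show 0 ≤ 2 * D * (A k) ^ (1 - θ) * (A k) * ((r ^ (2 ^ k)) ^ θ)
      have h1 := Real.rpow_nonneg ih (1 - θ)
      have h2 := Real.rpow_nonneg (pow_nonneg hr0 (2 ^ k)) θ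
      positivity
  -- key multiplicative inequality
  have key : ∀ (X Y : 𝒜) (a b : ℝ), X ≠ 0 → Y ≠ 0 → ‖X‖ ≤ a → ‖Y‖ ≤ a →
      p X ≤ b → p Y ≤ b → 0 ≤ b → ‖X * Y‖ ≤ 2 * D * a ^ (1 - θ) * a * b ^ θ := by
    intro X Y a b hX hY hXa hYa hXb hYb hb
    have hX0 : 0 < ‖X‖ := norm_pos_iff.mpr hX
    have hY0 : 0 < ‖Y‖ := norm_pos_iff.mpr hY
    have ha : 0 < a := lt_of_lt_of_le hX0 hXa
    have main : ∀ Z : 𝒜, Z ≠ 0 → ‖Z‖ ≤ a → p Z ≤ b →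
        ‖Z‖ * (p Z / ‖Z‖) ^ θ ≤ a ^ (1 - θ) * b ^ θ := by
      intro Z hZ hZa hZb
      have hZ0 : 0 < ‖Z‖ := norm_pos_iff.mpr hZ
      have h1 : (p Z / ‖Z‖) ^ θ ≤ (b / ‖Z‖) ^ θ :=
        Real.rpow_le_rpow (div_nonneg (hp0 Z) hZ0.le)
          ((div_le_div_iff_of_pos_right hZ0).mpr hZb) hθ0.le
      have h2 : ‖Z‖ * (b / ‖Z‖) ^ θ = ‖Z‖ ^ (1 - θ) * b ^ θ := by
        rw [Real.div_rpow hb hZ0.le, Real.rpow_sub hZ0, Real.rpow_one]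
        have : (‖Z‖ : ℝ) ^ θ ≠ 0 := ne_of_gt (Real.rpow_pos_of_pos hZ0 θ)
        field_simp
      have h3 : ‖Z‖ ^ (1 - θ) ≤ a ^ (1 - θ) :=
        Real.rpow_le_rpow hZ0.le hZa (by linarith)
      calc ‖Z‖ * (p Z / ‖Z‖) ^ θ ≤ ‖Z‖ * (b / ‖Z‖) ^ θ := by
            apply mul_le_mul_of_nonneg_left h1 hZ0.le
        _ = ‖Z‖ ^ (1 - θ) * b ^ θ := h2
        _ ≤ a ^ (1 - θ) * b ^ θ :=
            mul_le_mul_of_nonneg_right h3 (Real.rpow_nonneg hb θ)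
    have hbθ : 0 ≤ b ^ θ := Real.rpow_nonneg hb θ
    have haθ : 0 ≤ a ^ (1 - θ) := Real.rpow_nonneg ha.le (1 - θ)
    calc ‖X * Y‖ ≤ D * ‖X‖ * ‖Y‖ * ((p X / ‖X‖) ^ θ + (p Y / ‖Y‖) ^ θ) := hdiff X Y hX hY
      _ = D * (‖Y‖ * (‖X‖ * (p X / ‖X‖) ^ θ) + ‖X‖ * (‖Y‖ * (p Y / ‖Y‖) ^ θ)) := by ring
      _ ≤ D * (a * (a ^ (1 - θ) * b ^ θ) + a * (a ^ (1 - θ) * b ^ θ)) := by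
          apply mul_le_mul_of_nonneg_left _ hD.le
          apply add_le_add
          · exact mul_le_mul hYa (main X hX hXa hXb)
              (mul_nonneg (norm_nonneg _)
                (Real.rpow_nonneg (div_nonneg (hp0 _) (norm_nonneg _)) θ)) ha.le
          · exact mul_le_mul hXa (main Y hY hYa hYb)
              (mul_nonneg (norm_nonneg _)
                (Real.rpow_nonneg (div_nonneg (hp0 _) (norm_nonneg _)) θ)) ha.le
      _ = 2 * D * a ^ (1 - θ) * a * b ^ θ := by ring
  -- products of length 2^k bounded by A k
  have hQ : ∀ k, ∀ l : ℕ, 1 ≤ l → ‖Pprod T l (2 ^ k)‖ ≤ A k := by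
    intro k
    induction k with
    | zero =>
      intro l hl
      rw [pow_zero, Pprod_one]
      exact le_trans (hTM l hl) hMM₁
    | succ k ih =>
      intro l hl
      have hsplit : Pprod T l (2 ^ (k + 1)) = Pprod T (l + 2 ^ k) (2 ^ k) * Pprod T l (2 ^ k) := by
        rw [← Pprod_add]
        congr 1
        rw [pow_succ]
        omega
      set X := Pprod T (l + 2 ^ k) (2 ^ k)
      set Y := Pprod T l (2 ^ k)
      have hAk1 : A (k + 1) = 2 * D * (A k) ^ (1 - θ) * (A k) * ((r ^ (2 ^ k)) ^ θ) := rfl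
      rcases eq_or_ne X 0 with hX | hX
      · rw [hsplit, hX, zero_mul, norm_zero]; exact hA0 _
      rcases eq_or_ne Y 0 with hY | hY
      · rw [hsplit, hY, mul_zero, norm_zero]; exact hA0 _
      rw [hsplit, hAk1]
      exact key X Y (A k) (r ^ (2 ^ k)) hX hY (ih _ (le_trans hl (Nat.le_add_right _ _))) (ih _ hl)
        (hPp _ (Nat.one_le_two_pow) _ (le_trans hl (Nat.le_add_right _ _)))
        (hPp _ (Nat.one_le_two_pow) _ hl)
        (pow_nonneg hr0 _)
  -- numeric claim: some A k is below r₁ ^ 2^k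
  have hkey : ∃ k, A k ≤ r₁ ^ (2 ^ k) := by
    rcases eq_or_lt_of_le hr0 with hr | hr
    · -- r = 0
      refine ⟨1, ?_⟩
      have h1 : A 1 = 2 * D * M₁ ^ ((1:ℝ) - θ) * M₁ * ((r ^ (2 ^ 0)) ^ θ) := rfl
      rw [h1, ← hr]
      rw [pow_zero, pow_one, Real.zero_rpow (ne_of_gt hθ0), mul_zero]
      positivity
    · -- 0 < r
      set q : ℝ := (r / r₁) ^ θ with hqdef
      have hq0 : 0 < q := Real.rpow_pos_of_pos (div_pos hr hr₁0) θ
      have hq1 : q < 1 :=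
        Real.rpow_lt_one (div_nonneg hr.le hr₁0.le) ((div_lt_one hr₁0).mpr hrr₁) hθ0
      set E : ℝ := max (2 * D) 1 with hEdef
      have hE1 : (1:ℝ) ≤ E := le_max_right _ _
      have hE0 : (0:ℝ) < E := lt_of_lt_of_le one_pos hE1
      have hE2D : 2 * D ≤ E := le_max_left _ _
      by_contra hcon
      push_neg at hcon
      set W : ℕ → ℝ := fun k => A k / r₁ ^ (2 ^ k) with hWdef
      have hW1 : ∀ k, 1 < W k := fun k => (one_lt_div (pow_pos hr₁0 _)).mpr (hcon k)
      have hWpos : ∀ k, 0 < W k := fun k => lt_trans one_pos (hW1 k)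
      have hWA : ∀ k, A k = W k * r₁ ^ (2 ^ k) := by
        intro k
        simp only [hWdef]
        field_simp
      have hrec : ∀ k, W (k + 1) ≤ E * (W k) ^ 2 * q ^ (2 ^ k) := by
        intro k
        have hs0 : (0:ℝ) < r₁ ^ (2 ^ k) := pow_pos hr₁0 _
        have hW0 : (0:ℝ) < W k := hWpos k
        have hstep : A (k + 1) = 2 * D * (A k) ^ ((1:ℝ) - θ) * (A k) * ((r ^ (2 ^ k)) ^ θ) := rfl
        have hq2 : q ^ (2 ^ k) = (r ^ (2 ^ k)) ^ θ / (r₁ ^ (2 ^ k)) ^ θ := by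
          rw [hqdef, ← rpow_pow_comm _ (div_nonneg hr0 hr₁0.le) θ (2 ^ k), div_pow,
            Real.div_rpow (pow_nonneg hr0 _) hs0.le]
        have hsθ : (0:ℝ) < (r₁ ^ (2 ^ k)) ^ θ := Real.rpow_pos_of_pos hs0 θ
        have hiden : (r₁ ^ (2 ^ k)) ^ ((1:ℝ) - θ) * (r₁ ^ (2 ^ k)) * ((r ^ (2 ^ k)) ^ θ)
            = (r₁ ^ (2 ^ k)) ^ 2 * q ^ (2 ^ k) := by
          rw [hq2, Real.rpow_sub hs0, Real.rpow_one]
          field_simp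
        have h1 : ((W k) * r₁ ^ (2 ^ k)) ^ ((1:ℝ) - θ) ≤ W k * (r₁ ^ (2 ^ k)) ^ ((1:ℝ) - θ) := by
          rw [Real.mul_rpow hW0.le hs0.le]
          apply mul_le_mul_of_nonneg_right _ (Real.rpow_nonneg hs0.le _)
          calc (W k) ^ ((1:ℝ) - θ) ≤ (W k) ^ (1:ℝ) :=
                Real.rpow_le_rpow_of_exponent_le (hW1 k).le (by linarith)
            _ = W k := Real.rpow_one _
        have hup : A (k + 1) ≤ E * (W k) ^ 2 * q ^ (2 ^ k) * r₁ ^ (2 ^ (k + 1)) := by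
          rw [hstep, hWA k]
          have h2 : r₁ ^ (2 ^ (k + 1)) = (r₁ ^ (2 ^ k)) ^ 2 := by
            rw [pow_succ, pow_mul]
          calc 2 * D * (W k * r₁ ^ 2 ^ k) ^ ((1:ℝ) - θ) * (W k * r₁ ^ 2 ^ k) * (r ^ 2 ^ k) ^ θ
              ≤ 2 * D * (W k * (r₁ ^ 2 ^ k) ^ ((1:ℝ) - θ)) * (W k * r₁ ^ 2 ^ k)
                  * (r ^ 2 ^ k) ^ θ := by
                apply mul_le_mul_of_nonneg_right _ (Real.rpow_nonneg (pow_nonneg hr0 _) θ)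
                apply mul_le_mul_of_nonneg_right _ (by positivity)
                exact mul_le_mul_of_nonneg_left h1 (by positivity)
            _ = 2 * D * (W k) ^ 2
                  * ((r₁ ^ 2 ^ k) ^ ((1:ℝ) - θ) * (r₁ ^ 2 ^ k) * (r ^ 2 ^ k) ^ θ) := by ring
            _ = 2 * D * (W k) ^ 2 * ((r₁ ^ 2 ^ k) ^ 2 * q ^ (2 ^ k)) := by rw [hiden]
            _ ≤ E * (W k) ^ 2 * ((r₁ ^ 2 ^ k) ^ 2 * q ^ (2 ^ k)) := by
                apply mul_le_mul_of_nonneg_right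
                  (mul_le_mul_of_nonneg_right hE2D (by positivity)) (by positivity)
            _ = E * (W k) ^ 2 * q ^ (2 ^ k) * r₁ ^ (2 ^ (k + 1)) := by rw [h2]; ring
        have : W (k + 1) = A (k + 1) / r₁ ^ (2 ^ (k + 1)) := rfl
        rw [this, div_le_iff₀ (pow_pos hr₁0 _)]
        exact hup
      have he : ∀ k : ℕ, (k + 1) * 2 ^ k = 2 * (k * 2 ^ (k - 1)) + 2 ^ k := by
        intro k
        cases k with
        | zero => rfl
        | succ m =>
          show (m + 2) * 2 ^ (m + 1) = 2 * ((m + 1) * 2 ^ (m + 1 - 1)) + 2 ^ (m + 1)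
          rw [Nat.succ_sub_one]
          rw [pow_succ]
          ring
      have hG : ∀ k, W k ≤ (E * W 0) ^ (2 ^ k) * q ^ (k * 2 ^ (k - 1)) / E := by
        intro k
        induction k with
        | zero =>
          norm_num
          rw [mul_comm, mul_div_assoc, div_self hE0.ne', mul_one]
        | succ k ih =>
          calc W (k + 1) ≤ E * (W k) ^ 2 * q ^ (2 ^ k) := hrec k
            _ ≤ E * ((E * W 0) ^ (2 ^ k) * q ^ (k * 2 ^ (k - 1)) / E) ^ 2 * q ^ (2 ^ k) := by
                apply mul_le_mul_of_nonneg_right _ (by positivity)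
                apply mul_le_mul_of_nonneg_left _ hE0.le
                exact pow_le_pow_left₀ (hWpos k).le ih 2
            _ = (E * W 0) ^ (2 ^ (k + 1)) * q ^ ((k + 1) * 2 ^ (k + 1 - 1)) / E := by
                rw [Nat.succ_sub_one, he k]
                have h3 : (2:ℕ) ^ (k + 1) = 2 ^ k + 2 ^ k := by rw [pow_succ]; omega
                have h4 : 2 * (k * 2 ^ (k - 1)) = k * 2 ^ (k - 1) + k * 2 ^ (k - 1) :=
                  two_mul _
                rw [h3, h4, pow_add, pow_add, pow_add]
                field_simp
      have hEW0 : 0 < E * W 0 := mul_pos hE0 (hWpos 0)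
      obtain ⟨j', hj'⟩ := exists_pow_lt_of_lt_one
        (show (0:ℝ) < 1 / (E * W 0) by positivity) hq1
      set j := j' + 1 with hjdef
      have hj : (E * W 0) * q ^ j ≤ 1 := by
        have hqj : q ^ j ≤ q ^ j' := pow_le_pow_of_le_one hq0.le hq1.le (by omega)
        have hlt : q ^ j < 1 / (E * W 0) := lt_of_le_of_lt hqj hj'
        have h5 := mul_lt_mul_of_pos_left hlt hEW0
        have h6 : (E * W 0) * (1 / (E * W 0)) = 1 := mul_one_div_cancel hEW0.ne'
        linarith
      have hek : (2 * j) * 2 ^ (2 * j - 1) = j * 2 ^ (2 * j) := by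
        have h : 2 * j - 1 + 1 = 2 * j := by omega
        calc (2 * j) * 2 ^ (2 * j - 1) = j * (2 ^ (2 * j - 1) * 2) := by ring
          _ = j * 2 ^ (2 * j - 1 + 1) := by rw [pow_succ]
          _ = j * 2 ^ (2 * j) := by rw [h]
      have hWk := hG (2 * j)
      rw [hek] at hWk
      have hone : (E * W 0) ^ (2 ^ (2 * j)) * q ^ (j * 2 ^ (2 * j)) ≤ 1 := by
        rw [pow_mul q j (2 ^ (2 * j)), ← mul_pow (E * W 0) (q ^ j) (2 ^ (2 * j))]
        exact pow_le_one₀ (by positivity) hj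
      have hle : W (2 * j) ≤ 1 :=
        le_trans hWk ((div_le_one hE0).mpr (le_trans hone hE1))
      exact absurd hle (not_le.mpr (hW1 (2 * j)))
  obtain ⟨k₀, hk₀⟩ := hkey
  set n₀ : ℕ := 2 ^ k₀ with hn₀def
  have hn₀1 : 1 ≤ n₀ := Nat.one_le_two_pow
  have hn₀ : ∀ l : ℕ, 1 ≤ l → ‖Pprod T l n₀‖ ≤ r₁ ^ n₀ := fun l hl =>
    le_trans (hQ k₀ l hl) hk₀
  set C : ℝ := (M₁ / r₁) ^ n₀ with hCdef
  have hC0 : 0 < C := pow_pos (div_pos hM₁0 hr₁0) _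
  have hMr : 1 ≤ M₁ / r₁ := (one_le_div hr₁0).mpr (le_trans hr₁1.le hM₁1)
  have hfinal : ∀ n l : ℕ, 1 ≤ l → ‖Pprod T l n‖ ≤ C * r₁ ^ n := by
    intro n
    induction n using Nat.strong_induction_on with
    | _ n ihn =>
      intro l hl
      rcases lt_or_ge n n₀ with hn | hn
      · calc ‖Pprod T l n‖ ≤ M₁ ^ n := hPnorm n l hl
          _ = (M₁ / r₁) ^ n * r₁ ^ n := by
              rw [div_pow, div_mul_cancel₀]
              exact pow_ne_zero _ (ne_of_gt hr₁0)
          _ ≤ C * r₁ ^ n := by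
              apply mul_le_mul_of_nonneg_right (pow_le_pow_right₀ hMr hn.le)
                (pow_nonneg hr₁0.le n)
      · obtain ⟨m, rfl⟩ : ∃ m, n = n₀ + m := ⟨n - n₀, by omega⟩
        rw [Pprod_add]
        calc ‖Pprod T (l + n₀) m * Pprod T l n₀‖
            ≤ ‖Pprod T (l + n₀) m‖ * ‖Pprod T l n₀‖ := norm_mul_le _ _
          _ ≤ (C * r₁ ^ m) * r₁ ^ n₀ := by
              apply mul_le_mul (ihn m (by omega) (l + n₀) (by omega)) (hn₀ l hl)
                (norm_nonneg _) (by positivity)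
          _ = C * r₁ ^ (n₀ + m) := by rw [pow_add]; ring
  exact ⟨C, hC0, fun n l _ hl => hfinal n l hl⟩
end

section
/- Let (A, M, H1) be a sparse approximation triple with constants s_A and a_A, let H2 be a Hilbert space, and let F : H1 → H2 be a continuous map with F(0) = 0 that has the sparse Riesz property with constants D, β > 0 (‖F(x)‖ ≥ D⁻¹(‖x‖_{H1} − β√a_A·σ_{A,M}(x)) for all x ∈ M) and the almost linear property with constants γ₁, γ₂ ≥ 0 (‖F(x)−F(y)−F(x−y)‖ ≤ γ₁‖x−y‖_{H1} + γ₂√a_A(σ_{A,M}(x) + σ_{A,M}(y)) for all x, y ∈ M). Assume γ₃ := 1 − 2Dγ₁ − (Dγ₁ + Dγ₂ + β)√(a_A s_A) > 0. Then for every x⁰ ∈ M and ε > 0, the solution x⁰_M := argmin{‖x̂‖_M : x̂ ∈ M, ‖F(x̂) − F(x⁰)‖ ≤ ε} satisfies ‖x⁰_M − x⁰‖_{H1} ≤ ((2 + 8Dγ₂ + 4β)/γ₃)·√a_A·σ_{A,M}(x⁰) + ((2 + √(a_A s_A))·D/γ₃)·ε and ‖x⁰_M − x⁰‖_M ≤ ((2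 − 4Dγ₁ + 2(Dγ₁ + 2Dγ₂ + β)√(a_A s_A))/γ₃)·σ_{A,M}(x⁰) + (2D/γ₃)·√(s_A)·ε. -/
/-- A set-valued "best approximator": `y` is a best approximation of `x` in `K` (w.r.t. the norm
of `M`). -/
def IsBestApprox {M : Type*} [NormedAddCommGroup M] (K : Set M) (x y : M) : Prop :=
  y ∈ K ∧ ∀ z ∈ K, ‖x - y‖ ≤ ‖x - z‖

/-- A sparse approximation triple `(A, M, H1)`: the Banach space `M` is continuously embedded
into the Hilbert space `H1` via `j` with embedding norm at most one, `A = ⋃ i, A_i` is a union of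
closed linear subspaces, every nonempty closed subset of `M` is proximinal, best approximators
onto each `A_i` w.r.t. the `M`-norm are also best approximators w.r.t. the `H1`-norm, the norms
split along such best approximators, and `⋃_{k ≥ 1} kA` is dense in `H1`. -/
structure SparseApproxTriple (H1 : Type*) [NormedAddCommGroup H1] [InnerProductSpace ℝ H1]
    (M : Type*) [NormedAddCommGroup M] [NormedSpace ℝ M] (I : Type*) where
  /-- the (injective, norm at most one) embedding of `M` into `H1` -/
  j : M →ₗ[ℝ] H1
  j_inj : Function.Injective j
  j_norm_le : ∀ x : M, ‖j x‖ ≤ ‖x‖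
  /-- the subspaces whose union is `A` -/
  Asub : I → Submodule ℝ M
  index_nonempty : Nonempty I
  Asub_closed : ∀ i : I, IsClosed (Asub i : Set M)
  A_closed : IsClosed (⋃ i : I, (Asub i : Set M))
  /-- proximinality: every nonempty closed subset of `M` is proximinal -/
  prox : ∀ K : Set M, K.Nonempty → IsClosed K → ∀ x : M, ∃ y ∈ K, ∀ z ∈ K, ‖x - y‖ ≤ ‖x - z‖
  /-- common best approximator property -/
  common_best : ∀ (i : I) (x y : M), y ∈ Asub i → (∀ z ∈ Asub i, ‖x - y‖ ≤ ‖x - z‖) →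
    ∀ z ∈ Asub i, ‖j x - j y‖ ≤ ‖j x - j z‖
  /-- norm splitting in `M` -/
  norm_split_M : ∀ (i : I) (x y : M), y ∈ Asub i → (∀ z ∈ Asub i, ‖x - y‖ ≤ ‖x - z‖) →
    ‖x‖ = ‖y‖ + ‖x - y‖
  /-- norm splitting in `H1` -/
  norm_split_H : ∀ (i : I) (x y : M), y ∈ Asub i → (∀ z ∈ Asub i, ‖x - y‖ ≤ ‖x - z‖) →
    ‖j x‖ ^ 2 = ‖j y‖ ^ 2 + ‖j x - j y‖ ^ 2
  /-- the embedding of `A` into `M` is bounded (so that the sparsity `s_A` is finite) -/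
  sA_bddAbove : BddAbove
    {r : ℝ | ∃ x : M, x ∈ (⋃ i : I, (Asub i : Set M)) ∧ x ≠ 0 ∧ r = ‖x‖ / ‖j x‖}
  /-- sparse density: `⋃_{k ≥ 1} kA` is dense in `H1` -/
  sparse_dense : Dense (⋃ k : ℕ, {u : H1 | ∃ f : Fin (k + 1) → M,
    (∀ n, f n ∈ ⋃ i : I, (Asub i : Set M)) ∧ u = ∑ n, j (f n)})

namespace SparseApproxTriple

variable {H1 : Type*} [NormedAddCommGroup H1] [InnerProductSpace ℝ H1]
  {M : Type*} [NormedAddCommGroup M] [NormedSpace ℝ M] {I : Type*}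

/-- The union `A = ⋃ i, A_i`, as a subset of `M`. -/
def A (S : SparseApproxTriple H1 M I) : Set M := ⋃ i : I, (S.Asub i : Set M)

/-- `σ_{A,M}(x) := inf_{z ∈ A} ‖x − z‖_M`, the best sparse approximation error. -/
noncomputable def sigma (S : SparseApproxTriple H1 M I) (x : M) : ℝ :=
  sInf ((fun z => ‖x - z‖) '' S.A)

/-- The sparsity `s_A := (sup_{0 ≠ x ∈ A} ‖x‖_M/‖x‖_{H1})²`. -/
noncomputable def sA (S : SparseApproxTriple H1 M I) : ℝ :=
  (sSup {r : ℝ | ∃ x : M, x ∈ S.A ∧ x ≠ 0 ∧ r = ‖x‖ / ‖S.j x‖}) ^ 2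

/-- The sparse approximation ratio
`a_A := sup_{0 ≠ x ∈ M} (‖u_{A,M}‖_{H1}/‖x_{A,M}‖_M)²`, where `x_{A,M}` is a best approximator
of `x` in `A` and `u_{A,M}` a best approximator of `x − x_{A,M}` in `A` (both w.r.t. the norm of
`M`). -/
noncomputable def aA (S : SparseApproxTriple H1 M I) : ℝ :=
  sSup {r : ℝ | ∃ x xa u : M, x ≠ 0 ∧ IsBestApprox S.A x xa ∧
    IsBestApprox S.A (x - xa) u ∧ r = (‖S.j u‖ / ‖xa‖) ^ 2}

/-- `kA := {x₁ + ⋯ + x_k : x₁, …, x_k ∈ A}`. -/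
def sumSet (S : SparseApproxTriple H1 M I) (k : ℕ) : Set M :=
  {x : M | ∃ f : Fin k → M, (∀ n, f n ∈ S.A) ∧ x = ∑ n, f n}

end SparseApproxTriple

private lemma inner_eq_zero_of_forall_norm_le'' {E : Type*} [NormedAddCommGroup E]
    [InnerProductSpace ℝ E] {v w : E} (h : ∀ t : ℝ, ‖v‖ ≤ ‖v - t • w‖) :
    (inner ℝ v w : ℝ) = 0 := by
  rcases eq_or_ne w 0 with rfl | hw
  · simp
  have hwpos : (0:ℝ) < ‖w‖ := norm_pos_iff.mpr hw
  have hw2 : (0:ℝ) < ‖w‖ ^ 2 := by positivity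
  set c : ℝ := inner ℝ v w with hc
  have ht := h (c / ‖w‖ ^ 2)
  have hsq : ‖v‖ ^ 2 ≤ ‖v - (c / ‖w‖ ^ 2) • w‖ ^ 2 :=
    pow_le_pow_left₀ (norm_nonneg _) ht 2
  rw [norm_sub_sq_real, real_inner_smul_right, norm_smul] at hsq
  rw [← hc] at hsq
  have habs : (‖(c / ‖w‖ ^ 2 : ℝ)‖ * ‖w‖) ^ 2 = (c / ‖w‖ ^ 2) ^ 2 * ‖w‖ ^ 2 := by
    rw [mul_pow, Real.norm_eq_abs, sq_abs]
  rw [habs] at hsq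
  have h1 : (c / ‖w‖ ^ 2) * c = c ^ 2 / ‖w‖ ^ 2 := by ring
  have h2 : (c / ‖w‖ ^ 2) ^ 2 * ‖w‖ ^ 2 = c ^ 2 / ‖w‖ ^ 2 := by
    rw [div_pow, div_mul_eq_mul_div, pow_two (‖w‖ ^ 2), ← div_div, mul_div_assoc,
      div_self hw2.ne', mul_one]
  rw [h1, h2] at hsq
  have hdiv : c ^ 2 / ‖w‖ ^ 2 ≤ 0 := by linarith
  have hmul := mul_le_mul_of_nonneg_right hdiv hw2.le
  rw [zero_mul, div_mul_cancel₀ _ hw2.ne'] at hmul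
  have hc0 : c ^ 2 = 0 := le_antisymm hmul (sq_nonneg c)
  exact sq_eq_zero_iff.mp hc0

set_option maxHeartbeats 1000000 in
/-- For a sparse approximation triple `(A, M, H1)` and a continuous map
`F : H1 → H2` with `F(0) = 0` having the sparse Riesz property (constants `D, β > 0`) and the
almost linear property (constants `γ₁, γ₂ ≥ 0`) with
`γ₃ := 1 − 2Dγ₁ − (Dγ₁ + Dγ₂ + β)√(a_A s_A) > 0`, the minimizer `x⁰_M` of `‖·‖_M` over
`{x̂ : ‖F(x̂) − F(x⁰)‖ ≤ ε}` is a suboptimal approximation of `x⁰`. -/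
theorem sparse_optimization_suboptimal
    {H1 : Type*} [NormedAddCommGroup H1] [InnerProductSpace ℝ H1] [CompleteSpace H1]
    {H2 : Type*} [NormedAddCommGroup H2] [InnerProductSpace ℝ H2] [CompleteSpace H2]
    {M : Type*} [NormedAddCommGroup M] [NormedSpace ℝ M] [CompleteSpace M]
    {I : Type*} (S : SparseApproxTriple H1 M I)
    (F : H1 → H2) (hFcont : Continuous F) (hF0 : F 0 = 0)
    (D β γ₁ γ₂ : ℝ) (hD : 0 < D) (hβ : 0 < β) (hγ₁ : 0 ≤ γ₁) (hγ₂ : 0 ≤ γ₂)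
    (hSRP : ∀ x : M,
      D⁻¹ * (‖S.j x‖ - β * Real.sqrt S.aA * S.sigma x) ≤ ‖F (S.j x)‖)
    (hAL : ∀ x y : M,
      ‖F (S.j x) - F (S.j y) - F (S.j x - S.j y)‖ ≤
        γ₁ * ‖S.j x - S.j y‖ + γ₂ * Real.sqrt S.aA * (S.sigma x + S.sigma y))
    (hγ₃ : 0 < 1 - 2 * D * γ₁ - (D * γ₁ + D * γ₂ + β) * Real.sqrt (S.aA * S.sA))
    (x0 : M) (ε : ℝ) (hε : 0 < ε)
    (xm : M) (hfeas : ‖F (S.j xm) - F (S.j x0)‖ ≤ ε)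
    (hmin : ∀ y : M, ‖F (S.j y) - F (S.j x0)‖ ≤ ε → ‖xm‖ ≤ ‖y‖) :
    ‖S.j xm - S.j x0‖ ≤
        (2 + 8 * D * γ₂ + 4 * β) /
            (1 - 2 * D * γ₁ - (D * γ₁ + D * γ₂ + β) * Real.sqrt (S.aA * S.sA)) *
          Real.sqrt S.aA * S.sigma x0 +
        (2 + Real.sqrt (S.aA * S.sA)) * D /
            (1 - 2 * D * γ₁ - (D * γ₁ + D * γ₂ + β) * Real.sqrt (S.aA * S.sA)) * ε ∧
      ‖xm - x0‖ ≤
        (2 - 4 * D * γ₁ + 2 * (D * γ₁ + 2 * D * γ₂ + β) * Real.sqrt (S.aA * S.sA)) /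
            (1 - 2 * D * γ₁ - (D * γ₁ + D * γ₂ + β) * Real.sqrt (S.aA * S.sA)) * S.sigma x0 +
        2 * D / (1 - 2 * D * γ₁ - (D * γ₁ + D * γ₂ + β) * Real.sqrt (S.aA * S.sA)) *
          Real.sqrt S.sA * ε := by
  classical
  obtain ⟨i⟩ := S.index_nonempty
  have hA0 : (0:M) ∈ S.A := Set.mem_iUnion.2 ⟨i, (S.Asub i).zero_mem⟩
  have hAne : S.A.Nonempty := ⟨0, hA0⟩
  have hbdd : ∀ x : M, BddBelow ((fun z => ‖x - z‖) '' S.A) := fun x =>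
    ⟨0, by rintro r ⟨z, hz, rfl⟩; exact norm_nonneg _⟩
  have hsigma_le : ∀ (x z : M), z ∈ S.A → S.sigma x ≤ ‖x - z‖ := fun x z hz =>
    csInf_le (hbdd x) ⟨z, hz, rfl⟩
  have haA : 0 ≤ S.aA := Real.sSup_nonneg (by
    rintro r ⟨x, xa, u, -, -, -, rfl⟩; positivity)
  have hAS : Real.sqrt (S.aA * S.sA) = Real.sqrt S.aA * Real.sqrt S.sA :=
    Real.sqrt_mul haA _
  rw [hAS] at hγ₃ ⊢
  set a := Real.sqrt S.aA with ha_def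
  set s := Real.sqrt S.sA with hs_def
  have ha : 0 ≤ a := Real.sqrt_nonneg _
  have hsn : 0 ≤ s := Real.sqrt_nonneg _
  -- the sparsity estimate : `‖y‖_M ≤ √s_A ‖j y‖` for `y ∈ A`
  have hs_est : ∀ y : M, y ∈ S.A → ‖y‖ ≤ s * ‖S.j y‖ := by
    intro y hy
    rcases eq_or_ne y 0 with rfl | hy0
    · simp
    have hjy : S.j y ≠ 0 := fun h0 => hy0 (S.j_inj (by rw [h0, map_zero]))
    have hjy' : (0:ℝ) < ‖S.j y‖ := norm_pos_iff.mpr hjy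
    have hle : ‖y‖ / ‖S.j y‖ ≤
        sSup {r : ℝ | ∃ x : M, x ∈ S.A ∧ x ≠ 0 ∧ r = ‖x‖ / ‖S.j x‖} :=
      le_csSup S.sA_bddAbove ⟨y, hy, hy0, rfl⟩
    have hr0 : 0 ≤ sSup {r : ℝ | ∃ x : M, x ∈ S.A ∧ x ≠ 0 ∧ r = ‖x‖ / ‖S.j x‖} :=
      le_trans (div_nonneg (norm_nonneg _) (norm_nonneg _)) hle
    have hss : s = sSup {r : ℝ | ∃ x : M, x ∈ S.A ∧ x ≠ 0 ∧ r = ‖x‖ / ‖S.j x‖} := by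
      rw [hs_def, SparseApproxTriple.sA, Real.sqrt_sq hr0]
    calc ‖y‖ = ‖y‖ / ‖S.j y‖ * ‖S.j y‖ := (div_mul_cancel₀ _ hjy'.ne').symm
      _ ≤ sSup {r : ℝ | ∃ x : M, x ∈ S.A ∧ x ≠ 0 ∧ r = ‖x‖ / ‖S.j x‖} * ‖S.j y‖ :=
          mul_le_mul_of_nonneg_right hle (norm_nonneg _)
      _ = s * ‖S.j y‖ := by rw [hss]
  -- best approximator of `x0` in `A`
  obtain ⟨xa, hxaA, hxa⟩ := S.prox S.A hAne S.A_closed x0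
  obtain ⟨i0, hxa0⟩ := Set.mem_iUnion.1 hxaA
  have hsub : (S.Asub i0 : Set M) ⊆ S.A := Set.subset_iUnion (fun k : I => (S.Asub k : Set M)) i0
  have hxa_i0 : ∀ z ∈ S.Asub i0, ‖x0 - xa‖ ≤ ‖x0 - z‖ := fun z hz => hxa z (hsub hz)
  have hσ0 : S.sigma x0 = ‖x0 - xa‖ := le_antisymm (hsigma_le x0 xa hxaA)
    (le_csInf ⟨‖x0 - xa‖, ⟨xa, hxaA, rfl⟩⟩ (by rintro r ⟨z, hz, rfl⟩; exact hxa z hz))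
  -- best approximator of `xm` in `Asub i0`
  obtain ⟨p, hp, hpb⟩ := S.prox (S.Asub i0 : Set M) ⟨0, (S.Asub i0).zero_mem⟩
    (S.Asub_closed i0) xm
  -- orthogonality relations
  have horth1 : ∀ z ∈ S.Asub i0, (inner ℝ (S.j x0 - S.j xa) (S.j z) : ℝ) = 0 := by
    intro z hz
    apply inner_eq_zero_of_forall_norm_le''
    intro t
    have hmem : xa + t • z ∈ S.Asub i0 := (S.Asub i0).add_mem hxa0 ((S.Asub i0).smul_mem t hz)
    calc ‖S.j x0 - S.j xa‖ ≤ ‖S.j x0 - S.j (xa + t • z)‖ :=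
          S.common_best i0 x0 xa hxa0 hxa_i0 (xa + t • z) hmem
      _ = ‖S.j x0 - S.j xa - t • S.j z‖ := by rw [map_add, map_smul, sub_add_eq_sub_sub]
  have horth2 : ∀ z ∈ S.Asub i0, (inner ℝ (S.j xm - S.j p) (S.j z) : ℝ) = 0 := by
    intro z hz
    apply inner_eq_zero_of_forall_norm_le''
    intro t
    have hmem : p + t • z ∈ S.Asub i0 := (S.Asub i0).add_mem hp ((S.Asub i0).smul_mem t hz)
    calc ‖S.j xm - S.j p‖ ≤ ‖S.j xm - S.j (p + t • z)‖ :=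
          S.common_best i0 xm p hp hpb (p + t • z) hmem
      _ = ‖S.j xm - S.j p - t • S.j z‖ := by rw [map_add, map_smul, sub_add_eq_sub_sub]
  have hwA : xa - p ∈ S.Asub i0 := (S.Asub i0).sub_mem hxa0 hp
  -- the key Hilbert-space estimate `‖j xa − j p‖ ≤ ‖j xm − j x0‖`
  have hR : ‖S.j xa - S.j p‖ ≤ ‖S.j xm - S.j x0‖ := by
    have e1 : (inner ℝ (S.j x0 - S.j xa) (S.j xa - S.j p) : ℝ) = 0 := by
      have := horth1 (xa - p) hwA; rwa [map_sub] at this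
    have e2 : (inner ℝ (S.j xm - S.j p) (S.j xa - S.j p) : ℝ) = 0 := by
      have := horth2 (xa - p) hwA; rwa [map_sub] at this
    have hdec : S.j xa - S.j p = (S.j x0 - S.j xm) + (S.j xm - S.j p) - (S.j x0 - S.j xa) := by
      abel
    have e3 : ‖S.j xa - S.j p‖ ^ 2 ≤ ‖S.j xm - S.j x0‖ * ‖S.j xa - S.j p‖ := by
      calc ‖S.j xa - S.j p‖ ^ 2
          = inner ℝ (S.j xa - S.j p) (S.j xa - S.j p) := (real_inner_self_eq_norm_sq _).symm
        _ = inner ℝ ((S.j x0 - S.j xm) + (S.j xm - S.j p) - (S.j x0 - S.j xa))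
              (S.j xa - S.j p) := by rw [← hdec]
        _ = inner ℝ (S.j x0 - S.j xm) (S.j xa - S.j p)
              + inner ℝ (S.j xm - S.j p) (S.j xa - S.j p)
              - inner ℝ (S.j x0 - S.j xa) (S.j xa - S.j p) := by
            rw [inner_sub_left, inner_add_left]
        _ = inner ℝ (S.j x0 - S.j xm) (S.j xa - S.j p) := by rw [e1, e2]; ring
        _ ≤ ‖S.j x0 - S.j xm‖ * ‖S.j xa - S.j p‖ := real_inner_le_norm _ _
        _ = ‖S.j xm - S.j x0‖ * ‖S.j xa - S.j p‖ := by rw [norm_sub_rev]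
    nlinarith [norm_nonneg (S.j xa - S.j p), norm_nonneg (S.j xm - S.j x0)]
  -- minimality and the tail bound
  have hle : ‖xm‖ ≤ ‖x0‖ := hmin x0 (by simp only [sub_self, norm_zero]; exact hε.le)
  have hsplit : ‖xm‖ = ‖p‖ + ‖xm - p‖ := S.norm_split_M i0 xm p hp hpb
  have hx0tri : ‖x0‖ ≤ ‖xa‖ + ‖x0 - xa‖ := by
    simpa using norm_add_le xa (x0 - xa)
  have hxap : ‖xa - p‖ ≤ s * ‖S.j xm - S.j x0‖ := by
    have h1 := hs_est (xa - p) (hsub hwA)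
    rw [map_sub] at h1
    exact h1.trans (mul_le_mul_of_nonneg_left hR hsn)
  have hT : ‖xm - p‖ ≤ ‖x0 - xa‖ + s * ‖S.j xm - S.j x0‖ := by
    have h1 := norm_sub_norm_le xa p
    linarith
  have hσm : S.sigma xm ≤ ‖xm - p‖ := hsigma_le xm p (hsub hp)
  have hσh : S.sigma (xm - x0) ≤ ‖xm - p‖ + ‖x0 - xa‖ := by
    have hmem : p - xa ∈ S.A := hsub ((S.Asub i0).sub_mem hp hxa0)
    have h1 := hsigma_le (xm - x0) (p - xa) hmem
    have h2 : xm - x0 - (p - xa) = (xm - p) - (x0 - xa) := by abel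
    rw [h2] at h1
    exact h1.trans (norm_sub_le _ _)
  have hMb : ‖xm - x0‖ ≤ 2 * ‖x0 - xa‖ + 2 * (s * ‖S.j xm - S.j x0‖) := by
    have h2 : xm - x0 = (xm - p) + (p - xa) - (x0 - xa) := by abel
    have h3 : ‖(xm - p) + (p - xa) - (x0 - xa)‖ ≤ ‖(xm - p) + (p - xa)‖ + ‖x0 - xa‖ :=
      norm_sub_le _ _
    have h4 : ‖(xm - p) + (p - xa)‖ ≤ ‖xm - p‖ + ‖p - xa‖ := norm_add_le _ _
    have h5 : ‖p - xa‖ = ‖xa - p‖ := norm_sub_rev _ _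
    rw [h2]
    linarith
  -- analytic estimates
  have hAL' := hAL xm x0
  have hSRP' := hSRP (xm - x0)
  rw [map_sub] at hSRP'
  rw [hσ0] at hAL' ⊢
  have hFd : ‖F (S.j xm - S.j x0)‖ ≤
      ε + (γ₁ * ‖S.j xm - S.j x0‖ + γ₂ * a * (S.sigma xm + ‖x0 - xa‖)) := by
    have htri : ‖F (S.j xm - S.j x0)‖ ≤ ‖F (S.j xm) - F (S.j x0)‖ +
        ‖F (S.j xm) - F (S.j x0) - F (S.j xm - S.j x0)‖ := by
      simpa using norm_sub_le (F (S.j xm) - F (S.j x0))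
        (F (S.j xm) - F (S.j x0) - F (S.j xm - S.j x0))
    linarith
  have hkey0 := mul_le_mul_of_nonneg_left (hSRP'.trans hFd) hD.le
  rw [← mul_assoc, mul_inv_cancel₀ hD.ne', one_mul] at hkey0
  -- the master inequality
  have hkey : (1 - 2*D*γ₁ - (D*γ₁ + D*γ₂ + β) * (a * s)) * ‖S.j xm - S.j x0‖ ≤
      D * ε + (2*D*γ₂ + 2*β) * (a * ‖x0 - xa‖) := by
    have b1 : D * γ₂ * (a * (S.sigma xm + ‖x0 - xa‖)) ≤
        D * γ₂ * (a * ((‖x0 - xa‖ + s * ‖S.j xm - S.j x0‖) + ‖x0 - xa‖)) := by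
      apply mul_le_mul_of_nonneg_left _ (mul_nonneg hD.le hγ₂)
      apply mul_le_mul_of_nonneg_left _ ha
      linarith
    have b2 : β * (a * S.sigma (xm - x0)) ≤
        β * (a * ((‖x0 - xa‖ + s * ‖S.j xm - S.j x0‖) + ‖x0 - xa‖)) := by
      apply mul_le_mul_of_nonneg_left _ hβ.le
      apply mul_le_mul_of_nonneg_left _ ha
      linarith
    have e1 : 0 ≤ D * γ₁ * ‖S.j xm - S.j x0‖ :=
      mul_nonneg (mul_nonneg hD.le hγ₁) (norm_nonneg _)
    have e2 : 0 ≤ D * γ₁ * (a * (s * ‖S.j xm - S.j x0‖)) :=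
      mul_nonneg (mul_nonneg hD.le hγ₁) (mul_nonneg ha (mul_nonneg hsn (norm_nonneg _)))
    linarith [hkey0, b1, b2, e1, e2]
  have n1 : 0 ≤ a * ‖x0 - xa‖ := mul_nonneg ha (norm_nonneg _)
  have n2 : 0 ≤ D * ε := mul_nonneg hD.le hε.le
  have n3 : 0 ≤ a * s * (D * ε) := mul_nonneg (mul_nonneg ha hsn) n2
  have n4 : 0 ≤ D * γ₂ * (a * ‖x0 - xa‖) := mul_nonneg (mul_nonneg hD.le hγ₂) n1
  have n5 : 0 ≤ β * (a * ‖x0 - xa‖) := mul_nonneg hβ.le n1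
  constructor
  · have hrw : (2 + 8 * D * γ₂ + 4 * β) / (1 - 2 * D * γ₁ - (D * γ₁ + D * γ₂ + β) * (a * s))
          * a * ‖x0 - xa‖ +
        (2 + a * s) * D / (1 - 2 * D * γ₁ - (D * γ₁ + D * γ₂ + β) * (a * s)) * ε
        = ((2 + 8 * D * γ₂ + 4 * β) * a * ‖x0 - xa‖ + (2 + a * s) * D * ε) /
            (1 - 2 * D * γ₁ - (D * γ₁ + D * γ₂ + β) * (a * s)) := by
      field_simp
    rw [hrw, le_div_iff₀ hγ₃]
    linarith [hkey, n1, n2, n3, n4, n5]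
  · have hrw2 : (2 - 4 * D * γ₁ + 2 * (D * γ₁ + 2 * D * γ₂ + β) * (a * s)) /
          (1 - 2 * D * γ₁ - (D * γ₁ + D * γ₂ + β) * (a * s)) * ‖x0 - xa‖ +
        2 * D / (1 - 2 * D * γ₁ - (D * γ₁ + D * γ₂ + β) * (a * s)) * s * ε
        = ((2 - 4 * D * γ₁ + 2 * (D * γ₁ + 2 * D * γ₂ + β) * (a * s)) * ‖x0 - xa‖
            + 2 * D * s * ε) /
            (1 - 2 * D * γ₁ - (D * γ₁ + D * γ₂ + β) * (a * s)) := by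
      field_simp
    rw [hrw2, le_div_iff₀ hγ₃]
    have m1 : ‖xm - x0‖ * (1 - 2*D*γ₁ - (D*γ₁ + D*γ₂ + β) * (a * s)) ≤
        (2 * ‖x0 - xa‖ + 2 * (s * ‖S.j xm - S.j x0‖)) *
          (1 - 2*D*γ₁ - (D*γ₁ + D*γ₂ + β) * (a * s)) :=
      mul_le_mul_of_nonneg_right hMb hγ₃.le
    have m2 : (2 * s) * ((1 - 2*D*γ₁ - (D*γ₁ + D*γ₂ + β) * (a * s)) * ‖S.j xm - S.j x0‖) ≤
        (2 * s) * (D * ε + (2*D*γ₂ + 2*β) * (a * ‖x0 - xa‖)) :=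
      mul_le_mul_of_nonneg_left hkey (by linarith)
    have q1 : 0 ≤ D * γ₁ * (a * (s * ‖x0 - xa‖)) :=
      mul_nonneg (mul_nonneg hD.le hγ₁) (mul_nonneg ha (mul_nonneg hsn (norm_nonneg _)))
    have q2 : 0 ≤ D * γ₂ * (a * (s * ‖x0 - xa‖)) :=
      mul_nonneg (mul_nonneg hD.le hγ₂) (mul_nonneg ha (mul_nonneg hsn (norm_nonneg _)))
    linarith [m1, m2, q1, q2]
end

section
/- Let (A, M, H1) be a sparse approximation triple with constants s_A and a_A, let H2 be a Hilbert space, and let F : H1 → H2 be a bounded linear operator that has the sparse Riesz property ‖F(x)‖ ≥ D⁻¹(‖x‖_{H1} − β√a_A·σ_{A,M}(x)) for all x ∈ M, with D > 0 and β ∈ (0, 1/√(a_A s_A)). Then for every x⁰ ∈ M and ε > 0, the solution x⁰_M := argmin{‖x̂‖_M : x̂ ∈ M, ‖F(x̂) − F(x⁰)‖ ≤ ε} satisfies ‖x⁰_M − x⁰‖_{H1} ≤ ((2 + 4β)/(1 − β√(a_A s_A)))·√a_A·σ_{A,M}(x⁰) + ((2 + √(a_A s_A))·D/(1 − β√(a_A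 s_A)))·ε and ‖x⁰_M − x⁰‖_M ≤ ((2 + 2β√(a_A s_A))/(1 − β√(a_A s_A)))·σ_{A,M}(x⁰) + (2D/(1 − β√(a_A s_A)))·√(s_A)·ε. -/
set_option maxHeartbeats 1600000

/-- For a sparse approximation triple `(A, M, H1)` and a bounded *linear*
operator `F : H1 → H2` with the sparse Riesz property (constants `D > 0` and
`β ∈ (0, 1/√(a_A s_A))`), the minimizer `x⁰_M` of `‖·‖_M` over `{x̂ : ‖F(x̂) − F(x⁰)‖ ≤ ε}` is a
suboptimal approximation of `x⁰`. -/
theorem sparse_optimization_suboptimal_linear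
    {H1 : Type*} [NormedAddCommGroup H1] [InnerProductSpace ℝ H1] [CompleteSpace H1]
    {H2 : Type*} [NormedAddCommGroup H2] [InnerProductSpace ℝ H2] [CompleteSpace H2]
    {M : Type*} [NormedAddCommGroup M] [NormedSpace ℝ M] [CompleteSpace M]
    {I : Type*} (S : SparseApproxTriple H1 M I)
    (F : H1 →L[ℝ] H2)
    (D β : ℝ) (hD : 0 < D) (hβ0 : 0 < β) (hβ1 : β < 1 / Real.sqrt (S.aA * S.sA))
    (hSRP : ∀ x : M,
      D⁻¹ * (‖S.j x‖ - β * Real.sqrt S.aA * S.sigma x) ≤ ‖F (S.j x)‖)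
    (x0 : M) (ε : ℝ) (hε : 0 < ε)
    (xm : M) (hfeas : ‖F (S.j xm) - F (S.j x0)‖ ≤ ε)
    (hmin : ∀ y : M, ‖F (S.j y) - F (S.j x0)‖ ≤ ε → ‖xm‖ ≤ ‖y‖) :
    ‖S.j xm - S.j x0‖ ≤
        (2 + 4 * β) / (1 - β * Real.sqrt (S.aA * S.sA)) * Real.sqrt S.aA * S.sigma x0 +
        (2 + Real.sqrt (S.aA * S.sA)) * D / (1 - β * Real.sqrt (S.aA * S.sA)) * ε ∧
      ‖xm - x0‖ ≤
        (2 + 2 * β * Real.sqrt (S.aA * S.sA)) / (1 - β * Real.sqrt (S.aA * S.sA)) * S.sigma x0 +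
        2 * D / (1 - β * Real.sqrt (S.aA * S.sA)) * Real.sqrt S.sA * ε := by
  obtain ⟨i0⟩ := S.index_nonempty
  have hc0pos : 0 < Real.sqrt (S.aA * S.sA) := by
    by_contra hcon
    push_neg at hcon
    have h0 : Real.sqrt (S.aA * S.sA) = 0 := le_antisymm hcon (Real.sqrt_nonneg _)
    rw [h0] at hβ1
    norm_num at hβ1
    linarith
  have hsA0 : (0:ℝ) ≤ S.sA := sq_nonneg _
  have haA0 : (0:ℝ) ≤ S.aA := by
    have h1 := Real.sqrt_pos.mp hc0pos
    nlinarith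
  set a := Real.sqrt S.aA with ha_def
  set s := Real.sqrt S.sA with hs_def
  have ha0 : 0 ≤ a := Real.sqrt_nonneg _
  have hs0 : 0 ≤ s := Real.sqrt_nonneg _
  have hrwsqrt : Real.sqrt (S.aA * S.sA) = a * s := Real.sqrt_mul haA0 _
  rw [hrwsqrt] at hβ1 hc0pos ⊢
  have hc1 : β * (a * s) < 1 := by
    rw [lt_div_iff₀ hc0pos] at hβ1; linarith
  have hc1' : 0 < 1 - β * (a * s) := by linarith
  -- zero is in A
  have hA0 : (0:M) ∈ S.A := Set.mem_iUnion.mpr ⟨i0, (S.Asub i0).zero_mem⟩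
  -- best approximant of x0 in A
  obtain ⟨xa, hxaA, hxabest⟩ := S.prox S.A ⟨0, hA0⟩ S.A_closed x0
  obtain ⟨i, hxai⟩ := Set.mem_iUnion.mp hxaA
  have hxabest_i : ∀ z ∈ S.Asub i, ‖x0 - xa‖ ≤ ‖x0 - z‖ := fun z hz =>
    hxabest z (Set.mem_iUnion.mpr ⟨i, hz⟩)
  have hbdd : BddBelow ((fun z => ‖x0 - z‖) '' S.A) := by
    refine ⟨0, ?_⟩
    rintro r ⟨z, _, rfl⟩
    exact norm_nonneg _
  have hσ0_eq : S.sigma x0 = ‖x0 - xa‖ := by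
    unfold SparseApproxTriple.sigma
    apply le_antisymm
    · exact csInf_le hbdd ⟨xa, hxaA, rfl⟩
    · refine le_csInf ⟨‖x0 - xa‖, xa, hxaA, rfl⟩ ?_
      rintro r ⟨z, hz, rfl⟩
      exact hxabest z hz
  set σ0 := S.sigma x0 with hσ0_def
  have hσ0n : 0 ≤ σ0 := hσ0_eq ▸ norm_nonneg _
  have hx0split : ‖x0‖ = ‖xa‖ + ‖x0 - xa‖ := S.norm_split_M i x0 xa hxai hxabest_i
  set h := xm - x0 with hh_def
  obtain ⟨w, hwA, hwbest⟩ :=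
    S.prox (S.Asub i) ⟨0, (S.Asub i).zero_mem⟩ (S.Asub_closed i) h
  -- ‖j w‖ ≤ ‖j h‖
  have hsplitH := S.norm_split_H i h w hwA hwbest
  have hjw_le : ‖S.j w‖ ≤ ‖S.j h‖ := by
    nlinarith [norm_nonneg (S.j w), norm_nonneg (S.j h), sq_nonneg ‖S.j h - S.j w‖]
  -- ‖w‖ ≤ s * ‖j w‖
  have hw_le : ‖w‖ ≤ s * ‖S.j w‖ := by
    rcases eq_or_ne w 0 with rfl | hw0
    · simp
    · have hjw0 : S.j w ≠ 0 := fun hjz => hw0 (S.j_inj (by rw [hjz, map_zero]))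
      have hjwpos : 0 < ‖S.j w‖ := norm_pos_iff.mpr hjw0
      have hmem : ‖w‖ / ‖S.j w‖ ∈
          {r : ℝ | ∃ x : M, x ∈ (⋃ i : I, (S.Asub i : Set M)) ∧ x ≠ 0 ∧ r = ‖x‖ / ‖S.j x‖} :=
        ⟨w, Set.mem_iUnion.mpr ⟨i, hwA⟩, hw0, rfl⟩
      have hle : ‖w‖ / ‖S.j w‖ ≤
          sSup {r : ℝ | ∃ x : M, x ∈ (⋃ i : I, (S.Asub i : Set M)) ∧ x ≠ 0 ∧ r = ‖x‖ / ‖S.j x‖} :=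
        le_csSup S.sA_bddAbove hmem
      have ht0 : 0 ≤
          sSup {r : ℝ | ∃ x : M, x ∈ (⋃ i : I, (S.Asub i : Set M)) ∧ x ≠ 0 ∧ r = ‖x‖ / ‖S.j x‖} :=
        le_trans (by positivity) hle
      have hsAeq : S.sA =
          (sSup {r : ℝ | ∃ x : M, x ∈ (⋃ i : I, (S.Asub i : Set M)) ∧ x ≠ 0 ∧ r = ‖x‖ / ‖S.j x‖}) ^ 2 :=
        rfl
      have hst : s =
          sSup {r : ℝ | ∃ x : M, x ∈ (⋃ i : I, (S.Asub i : Set M)) ∧ x ≠ 0 ∧ r = ‖x‖ / ‖S.j x‖} := by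
        rw [hs_def, hsAeq, Real.sqrt_sq ht0]
      rw [hst]
      rwa [div_le_iff₀ hjwpos] at hle
  have hσh : S.sigma h ≤ ‖h - w‖ := by
    unfold SparseApproxTriple.sigma
    apply csInf_le
    · refine ⟨0, ?_⟩
      rintro r ⟨z, _, rfl⟩
      exact norm_nonneg _
    · exact ⟨w, Set.mem_iUnion.mpr ⟨i, hwA⟩, rfl⟩
  set hr := h - w with hhr_def
  -- cone condition
  have hbest2 : ∀ z ∈ S.Asub i, ‖(xa + hr) - xa‖ ≤ ‖(xa + hr) - z‖ := by
    intro z hz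
    have e1 : (xa + hr) - xa = h - w := by rw [hhr_def]; abel
    have e2 : (xa + hr) - z = h - (w + (z - xa)) := by rw [hhr_def]; abel
    rw [e1, e2]
    exact hwbest _ (add_mem hwA (sub_mem hz hxai))
  have hsplit2 : ‖xa + hr‖ = ‖xa‖ + ‖(xa + hr) - xa‖ :=
    S.norm_split_M i (xa + hr) xa hxai hbest2
  have hrsimp : (xa + hr) - xa = hr := by abel
  rw [hrsimp] at hsplit2
  have hfeas0 : ‖F (S.j x0) - F (S.j x0)‖ ≤ ε := by simp [hε.le]
  have hminle : ‖xm‖ ≤ ‖x0‖ := hmin x0 hfeas0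
  have htri : ‖xa + hr‖ ≤ ‖xm‖ + ‖(x0 - xa) + w‖ := by
    have e3 : xa + hr = xm - ((x0 - xa) + w) := by rw [hhr_def, hh_def]; abel
    rw [e3]
    exact norm_sub_le _ _
  have htri2 : ‖(x0 - xa) + w‖ ≤ ‖x0 - xa‖ + ‖w‖ := norm_add_le _ _
  have hcone : ‖hr‖ ≤ 2 * σ0 + ‖w‖ := by
    rw [hσ0_eq]
    linarith
  -- sparse Riesz property
  have hFh : ‖F (S.j h)‖ ≤ ε := by
    have e4 : S.j h = S.j xm - S.j x0 := by rw [hh_def]; exact map_sub _ _ _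
    rw [e4, map_sub]
    exact hfeas
  have hsrp := (hSRP h).trans hFh
  rw [inv_mul_le_iff₀ hD] at hsrp
  have hkey : S.sigma h ≤ 2 * σ0 + s * ‖S.j h‖ := by
    have : ‖w‖ ≤ s * ‖S.j h‖ :=
      hw_le.trans (mul_le_mul_of_nonneg_left hjw_le hs0)
    linarith
  have hjh' : ‖S.j h‖ * (1 - β * (a * s)) ≤ 2 * β * a * σ0 + D * ε := by
    nlinarith [mul_le_mul_of_nonneg_left hkey (mul_nonneg hβ0.le ha0)]
  have hjh : ‖S.j h‖ ≤ (2 * β * a * σ0 + D * ε) / (1 - β * (a * s)) := by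
    rw [le_div_iff₀ hc1']
    exact hjh'
  constructor
  · have e6 : S.j xm - S.j x0 = S.j h := (map_sub S.j xm x0).symm
    rw [e6]
    have heq : (2 + 4 * β) / (1 - β * (a * s)) * a * σ0 + (2 + a * s) * D / (1 - β * (a * s)) * ε
        = ((2 + 4 * β) * a * σ0 + (2 + a * s) * D * ε) / (1 - β * (a * s)) := by
      field_simp
      try ring
    rw [heq, le_div_iff₀ hc1']
    nlinarith [mul_nonneg ha0 hσ0n, mul_nonneg hD.le hε.le,
      mul_nonneg (mul_nonneg ha0 hs0) (mul_nonneg hD.le hε.le),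
      mul_nonneg hβ0.le (mul_nonneg ha0 hσ0n)]
  · have hM : ‖h‖ ≤ ‖w‖ + ‖hr‖ := by
      have e5 : h = w + hr := by rw [hhr_def]; abel
      rw [e5]
      exact norm_add_le _ _
    have hwjh : ‖w‖ ≤ s * ‖S.j h‖ :=
      hw_le.trans (mul_le_mul_of_nonneg_left hjw_le hs0)
    have hMh : ‖h‖ ≤ 2 * σ0 + 2 * s * ‖S.j h‖ := by linarith
    have heq : (2 + 2 * β * (a * s)) / (1 - β * (a * s)) * σ0
          + 2 * D / (1 - β * (a * s)) * s * ε
        = 2 * σ0 + 2 * s * ((2 * β * a * σ0 + D * ε) / (1 - β * (a * s))) := by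
      linear_combination (2 * σ0) * mul_inv_cancel₀ hc1'.ne'
      try ring
    rw [heq]
    nlinarith [mul_le_mul_of_nonneg_left hjh (by positivity : (0:ℝ) ≤ 2 * s)]
end

section
/- Let (A, M, H1) be a sparse approximation triple with sparse approximation ratio a_A. Then for every x ∈ M and every best approximator x_{A,M} ∈ A of x with respect to ‖·‖_M, one has ‖x − x_{A,M}‖_{H1} ≤ √a_A·‖x‖_M. -/
section Scalar
variable {H : Type*} [NormedAddCommGroup H] [InnerProductSpace ℝ H]

lemma inner_zero_of_norm_le {v w : H} (h : ∀ t : ℝ, ‖v‖ ≤ ‖v - t • w‖) :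
    inner ℝ v w = (0:ℝ) := by
  by_contra hc
  have hw : w ≠ 0 := by rintro rfl; simp at hc
  have hw2 : (0:ℝ) < ‖w‖ ^ 2 := pow_pos (norm_pos_iff.mpr hw) 2
  set c : ℝ := inner ℝ v w with hcdef
  have ht := h (c / ‖w‖ ^ 2)
  have hsq : ‖v‖ ^ 2 ≤ ‖v - (c / ‖w‖ ^ 2) • w‖ ^ 2 := by
    have := norm_nonneg v
    nlinarith [norm_nonneg (v - (c / ‖w‖ ^ 2) • w)]
  rw [norm_sub_sq_real, real_inner_smul_right, norm_smul] at hsq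
  rw [mul_pow] at hsq
  have h2 : |c / ‖w‖ ^ 2| ^ 2 = (c / ‖w‖ ^ 2) ^ 2 := sq_abs _
  rw [Real.norm_eq_abs, h2] at hsq
  have hcc : c ^ 2 ≤ 0 := by
    have h3 : (c / ‖w‖ ^ 2) ^ 2 * ‖w‖ ^ 2 = c ^ 2 / ‖w‖ ^ 2 := by
      field_simp
    rw [h3] at hsq
    have : 2 * (c / ‖w‖ ^ 2 * c) = 2 * c ^ 2 / ‖w‖ ^ 2 := by field_simp
    rw [this] at hsq
    have := (div_le_div_iff_of_pos_right hw2).mp (by linarith : 2 * c ^ 2 / ‖w‖ ^ 2 ≤ c ^ 2 / ‖w‖ ^ 2)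
    linarith
  exact hc (by nlinarith [sq_nonneg c])

lemma sum_sq_le_sq_sum (n : ℕ) (f : ℕ → ℝ) (hf : ∀ k, 0 ≤ f k) :
    ∑ k ∈ Finset.range n, (f k) ^ 2 ≤ (∑ k ∈ Finset.range n, f k) ^ 2 := by
  induction n with
  | zero => simp
  | succ n ih =>
    rw [Finset.sum_range_succ, Finset.sum_range_succ]
    have h1 : 0 ≤ ∑ k ∈ Finset.range n, f k := Finset.sum_nonneg fun k _ => hf k
    nlinarith [hf n]

end Scalar

section Aux
variable {H1 : Type*} [NormedAddCommGroup H1] [InnerProductSpace ℝ H1]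
  {M : Type*} [NormedAddCommGroup M] [NormedSpace ℝ M] {I : Type*}
  (S : SparseApproxTriple H1 M I)

namespace SparseApproxTriple

lemma zero_mem_A : (0 : M) ∈ S.A := by
  obtain ⟨i⟩ := S.index_nonempty
  exact Set.mem_iUnion.2 ⟨i, (S.Asub i).zero_mem⟩

lemma exists_best (x : M) : ∃ y, IsBestApprox S.A x y := by
  obtain ⟨y, hy, h⟩ := S.prox S.A ⟨0, S.zero_mem_A⟩ S.A_closed x
  exact ⟨y, hy, h⟩

lemma best_sub {x y : M} (h : IsBestApprox S.A x y) :
    ∃ i, y ∈ S.Asub i ∧ ∀ z ∈ S.Asub i, ‖x - y‖ ≤ ‖x - z‖ := by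
  obtain ⟨i, hi⟩ := Set.mem_iUnion.1 h.1
  exact ⟨i, hi, fun z hz => h.2 z (Set.mem_iUnion.2 ⟨i, hz⟩)⟩

lemma split_M {x y : M} (h : IsBestApprox S.A x y) : ‖x‖ = ‖y‖ + ‖x - y‖ := by
  obtain ⟨i, hi, hb⟩ := S.best_sub h
  exact S.norm_split_M i x y hi hb

lemma split_H {x y : M} (h : IsBestApprox S.A x y) :
    ‖S.j x‖ ^ 2 = ‖S.j y‖ ^ 2 + ‖S.j x - S.j y‖ ^ 2 := by
  obtain ⟨i, hi, hb⟩ := S.best_sub h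
  exact S.norm_split_H i x y hi hb

lemma best_zero {x y : M} (hx : x = 0) (h : IsBestApprox S.A x y) : y = 0 := by
  subst hx
  have h0 := h.2 0 S.zero_mem_A
  simp only [sub_zero, norm_zero, zero_sub, norm_neg] at h0
  simpa [norm_le_zero_iff] using h0

lemma u_norm_le {x xa u : M} (h1 : IsBestApprox S.A x xa)
    (h2 : IsBestApprox S.A (x - xa) u) : ‖u‖ ≤ ‖xa‖ := by
  have hA := h1.2 u h2.1
  have hs := S.split_M h2
  have hrw : x - xa - u = x - u - xa := by abel
  have ht : ‖x - u‖ - ‖xa‖ ≤ ‖x - xa - u‖ := by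
    rw [hrw]; exact norm_sub_norm_le _ _
  linarith

lemma aA_set_bdd : BddAbove {r : ℝ | ∃ x xa u : M, x ≠ 0 ∧ IsBestApprox S.A x xa ∧
    IsBestApprox S.A (x - xa) u ∧ r = (‖S.j u‖ / ‖xa‖) ^ 2} := by
  refine ⟨1, fun r hr => ?_⟩
  obtain ⟨x, xa, u, _, h1, h2, rfl⟩ := hr
  rcases eq_or_ne xa 0 with h | h
  · simp [h]
  · have h3 : ‖S.j u‖ ≤ ‖xa‖ := (S.j_norm_le u).trans (S.u_norm_le h1 h2)
    have h4 : (0:ℝ) < ‖xa‖ := norm_pos_iff.2 h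
    have h5 : ‖S.j u‖ / ‖xa‖ ≤ 1 := (div_le_one h4).2 h3
    have h0 : 0 ≤ ‖S.j u‖ / ‖xa‖ := by positivity
    nlinarith

lemma key_bound {x xa u : M} (hx : x ≠ 0) (h1 : IsBestApprox S.A x xa)
    (h2 : IsBestApprox S.A (x - xa) u) : ‖S.j u‖ ^ 2 ≤ S.aA * ‖xa‖ ^ 2 := by
  rcases eq_or_ne xa 0 with h | h
  · have hu : u = 0 := by
      have hs := S.split_M h2
      have hA := h1.2 u h2.1
      rw [h, sub_zero] at hs hA
      have h6 : ‖x - u‖ ≤ ‖x‖ - ‖u‖ := by linarith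
      have h7 : ‖u‖ ≤ 0 := by linarith [hA]
      simpa [norm_le_zero_iff] using h7
    simp [hu, h]
  · have h4 : (0:ℝ) < ‖xa‖ := norm_pos_iff.2 h
    have hmem : (‖S.j u‖ / ‖xa‖) ^ 2 ∈ {r : ℝ | ∃ x xa u : M, x ≠ 0 ∧
        IsBestApprox S.A x xa ∧ IsBestApprox S.A (x - xa) u ∧
        r = (‖S.j u‖ / ‖xa‖) ^ 2} := ⟨x, xa, u, hx, h1, h2, rfl⟩
    have hle : (‖S.j u‖ / ‖xa‖) ^ 2 ≤ S.aA := le_csSup S.aA_set_bdd hmem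
    have heq : ‖S.j u‖ ^ 2 = (‖S.j u‖ / ‖xa‖) ^ 2 * ‖xa‖ ^ 2 := by
      field_simp
    rw [heq]
    have h5 : (0:ℝ) < ‖xa‖ ^ 2 := pow_pos h4 2
    nlinarith

end SparseApproxTriple
end Aux

/-- For a sparse approximation triple `(A, M, H1)`, every best approximator
`x_{A,M} ∈ A` of `x ∈ M` (w.r.t. the `M`-norm) satisfies
`‖x − x_{A,M}‖_{H1} ≤ √a_A · ‖x‖_M`. -/
theorem best_approx_H1_bound
    {H1 : Type*} [NormedAddCommGroup H1] [InnerProductSpace ℝ H1] [CompleteSpace H1]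
    {M : Type*} [NormedAddCommGroup M] [NormedSpace ℝ M] [CompleteSpace M]
    {I : Type*} (S : SparseApproxTriple H1 M I)
    (x y : M) (hy : IsBestApprox S.A x y) :
    ‖S.j x - S.j y‖ ≤ Real.sqrt S.aA * ‖x‖ := by
  rcases eq_or_ne x 0 with rfl | hx
  · have hy0 : y = 0 := S.best_zero rfl hy
    subst hy0
    simp
  · choose ba hba using S.exists_best
    set p : ℕ → M := fun n => Nat.rec (x - y) (fun _ q => q - ba q) n with hpdef
    have hp0 : p 0 = x - y := rfl
    have hps : ∀ n, p (n + 1) = p n - ba (p n) := fun n => rfl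
    set c : ℕ → M := fun n => Nat.rec y (fun k _ => ba (p k)) n with hcdef
    have hc0 : c 0 = y := rfl
    have hcs : ∀ n, c (n + 1) = ba (p n) := fun n => rfl
    have haA : 0 ≤ S.aA := by
      have hmem : (‖S.j (ba (p 0))‖ / ‖y‖) ^ 2 ∈ {r : ℝ | ∃ x xa u : M, x ≠ 0 ∧
          IsBestApprox S.A x xa ∧ IsBestApprox S.A (x - xa) u ∧
          r = (‖S.j u‖ / ‖xa‖) ^ 2} := ⟨x, y, ba (p 0), hx, hy, hba (p 0), rfl⟩
      exact le_trans (sq_nonneg _) (le_csSup S.aA_set_bdd hmem)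
    have stepA : ∀ n, ‖S.j (c (n + 1))‖ ^ 2 ≤ S.aA * ‖c n‖ ^ 2 := by
      intro n
      cases n with
      | zero =>
        have h2 : IsBestApprox S.A (x - y) (ba (p 0)) := hba (p 0)
        have := S.key_bound hx hy h2
        rw [hcs, hc0]
        exact this
      | succ k =>
        rcases eq_or_ne (p k) 0 with h0 | h0
        · have hbak : ba (p k) = 0 := S.best_zero h0 (hba (p k))
          have hpk1 : p (k + 1) = 0 := by rw [hps, hbak, sub_zero]; exact h0
          have hbak1 : ba (p (k + 1)) = 0 := S.best_zero hpk1 (hba (p (k + 1)))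
          rw [hcs (k + 1), hcs k, hbak1, hbak]
          simp
        · have h2 : IsBestApprox S.A (p k - ba (p k)) (ba (p (k + 1))) := by
            rw [← hps]; exact hba (p (k + 1))
          have h3 := S.key_bound h0 (hba (p k)) h2
          rw [hcs (k + 1), hcs k]
          exact h3
    have stepB : ∀ n, ‖S.j (p n)‖ ^ 2 = ‖S.j (c (n + 1))‖ ^ 2 + ‖S.j (p (n + 1))‖ ^ 2 := by
      intro n
      have h := S.split_H (hba (p n))
      rw [hcs n, hps n, map_sub]
      exact h
    have stepC : ∀ n, ‖p n‖ = ‖c (n + 1)‖ + ‖p (n + 1)‖ := by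
      intro n
      have h := S.split_M (hba (p n))
      rw [hcs n, hps n]
      exact h
    have sumC : ∀ n, ∑ k ∈ Finset.range (n + 1), ‖c k‖ + ‖p n‖ = ‖x‖ := by
      intro n
      induction n with
      | zero =>
        have h := S.split_M hy
        simp only [zero_add, Finset.sum_range_one, hc0, hp0]
        linarith
      | succ n ih =>
        rw [Finset.sum_range_succ]
        have h := stepC n
        linarith
    have sumH : ∀ n, ‖S.j (p 0)‖ ^ 2 =
        ∑ k ∈ Finset.range n, ‖S.j (c (k + 1))‖ ^ 2 + ‖S.j (p n)‖ ^ 2 := by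
      intro n
      induction n with
      | zero => simp
      | succ n ih =>
        rw [Finset.sum_range_succ]
        have h := stepB n
        linarith
    have hsumle : ∀ n, ∑ k ∈ Finset.range n, ‖c k‖ ≤ ‖x‖ := by
      intro n
      cases n with
      | zero => simp
      | succ m =>
        have h := sumC m
        have h2 := norm_nonneg (p m)
        linarith
    have hnorm : ∀ n, ‖S.j (p 0)‖ ^ 2 ≤ S.aA * ‖x‖ ^ 2 + ‖S.j (p n)‖ ^ 2 := by
      intro n
      have h1 := sumH n
      have h2 : ∑ k ∈ Finset.range n, ‖S.j (c (k + 1))‖ ^ 2 ≤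
          S.aA * ∑ k ∈ Finset.range n, ‖c k‖ ^ 2 := by
        rw [Finset.mul_sum]
        exact Finset.sum_le_sum fun k _ => stepA k
      have h3 : ∑ k ∈ Finset.range n, ‖c k‖ ^ 2 ≤ (∑ k ∈ Finset.range n, ‖c k‖) ^ 2 :=
        sum_sq_le_sq_sum n _ fun k => norm_nonneg _
      have h4 := hsumle n
      have h5 : (∑ k ∈ Finset.range n, ‖c k‖) ^ 2 ≤ ‖x‖ ^ 2 := by
        have h6 : (0:ℝ) ≤ ∑ k ∈ Finset.range n, ‖c k‖ :=
          Finset.sum_nonneg fun k _ => norm_nonneg _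
        nlinarith
      nlinarith
    have hsummable : Summable fun k => ‖c k‖ :=
      summable_of_sum_range_le (fun n => norm_nonneg _) hsumle
    have hsc : Summable c := hsummable.of_norm
    have hsc1 : Summable fun k => c (k + 1) := (summable_nat_add_iff 1).2 hsc
    have hpn : ∀ n, p n = p 0 - ∑ k ∈ Finset.range n, c (k + 1) := by
      intro n
      induction n with
      | zero => simp
      | succ n ih =>
        rw [hps n, Finset.sum_range_succ, hcs n, ← sub_sub, ← ih]
    set L : M := p 0 - ∑' k, c (k + 1) with hLdef
    have hLtend : Filter.Tendsto p Filter.atTop (nhds L) := by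
      have h := hsc1.hasSum.tendsto_sum_nat
      have h2 := Filter.Tendsto.const_sub (p 0) h
      exact h2.congr fun n => (hpn n).symm
    have hbest0 : ∀ z ∈ S.A, ‖L‖ ≤ ‖L - z‖ := by
      intro z hz
      have hstep : ∀ n, ‖p (n + 1)‖ ≤ ‖p n - z‖ := by
        intro n
        rw [hps n]
        exact (hba (p n)).2 z hz
      have h1 : Filter.Tendsto (fun n => ‖p (n + 1)‖) Filter.atTop (nhds ‖L‖) :=
        (hLtend.comp (Filter.tendsto_add_atTop_nat 1)).norm
      have h2 : Filter.Tendsto (fun n => ‖p n - z‖) Filter.atTop (nhds ‖L - z‖) :=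
        (hLtend.sub_const z).norm
      exact le_of_tendsto_of_tendsto' h1 h2 hstep
    have horth : ∀ z ∈ S.A, (inner ℝ (S.j L) (S.j z) : ℝ) = 0 := by
      intro z hz
      obtain ⟨i, hzi⟩ := Set.mem_iUnion.1 hz
      have hb : ∀ w ∈ S.Asub i, ‖L - 0‖ ≤ ‖L - w‖ := fun w hw => by
        simpa using hbest0 w (Set.mem_iUnion.2 ⟨i, hw⟩)
      have hcb := S.common_best i L 0 (S.Asub i).zero_mem hb
      apply inner_zero_of_norm_le
      intro t
      have h := hcb (t • z) ((S.Asub i).smul_mem t hzi)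
      rw [map_zero, sub_zero, map_smul] at h
      exact h
    have hjL : S.j L = 0 := by
      have hcont : Continuous fun u : H1 => (inner ℝ (S.j L) u : ℝ) :=
        continuous_const.inner continuous_id
      have heq : Set.EqOn (fun u : H1 => (inner ℝ (S.j L) u : ℝ)) (fun _ => (0:ℝ))
          (⋃ k : ℕ, {u : H1 | ∃ f : Fin (k + 1) → M,
            (∀ n, f n ∈ ⋃ i : I, (S.Asub i : Set M)) ∧ u = ∑ n, S.j (f n)}) := by
        rintro u hu
        obtain ⟨s, hs⟩ := Set.mem_iUnion.1 hu
        obtain ⟨f, hf, rfl⟩ := hs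
        simp only
        rw [inner_sum]
        exact Finset.sum_eq_zero fun n _ => horth (f n) (hf n)
      have hext := Continuous.ext_on S.sparse_dense hcont continuous_const heq
      have h0 : (inner ℝ (S.j L) (S.j L) : ℝ) = 0 := congrFun hext (S.j L)
      exact inner_self_eq_zero.1 h0
    have hJ : Continuous S.j :=
      (LinearMap.mkContinuous S.j 1 (fun v => by simpa using S.j_norm_le v)).continuous
    have hjp : Filter.Tendsto (fun n => S.j (p n)) Filter.atTop (nhds (S.j L)) :=
      (hJ.tendsto L).comp hLtend
    rw [hjL] at hjp
    have hsq : Filter.Tendsto (fun n => ‖S.j (p n)‖ ^ 2) Filter.atTop (nhds 0) := by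
      have h := hjp.norm.pow 2
      simpa using h
    have hfinal : ‖S.j (p 0)‖ ^ 2 ≤ S.aA * ‖x‖ ^ 2 := by
      have htend : Filter.Tendsto (fun n => S.aA * ‖x‖ ^ 2 + ‖S.j (p n)‖ ^ 2)
          Filter.atTop (nhds (S.aA * ‖x‖ ^ 2)) := by
        simpa using hsq.const_add (S.aA * ‖x‖ ^ 2)
      exact ge_of_tendsto' htend hnorm
    have h1 : ‖S.j x - S.j y‖ = ‖S.j (p 0)‖ := by rw [hp0, map_sub]
    rw [h1]
    have h2 : ‖S.j (p 0)‖ = Real.sqrt (‖S.j (p 0)‖ ^ 2) :=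
      (Real.sqrt_sq (norm_nonneg _)).symm
    rw [h2]
    calc Real.sqrt (‖S.j (p 0)‖ ^ 2) ≤ Real.sqrt (S.aA * ‖x‖ ^ 2) :=
          Real.sqrt_le_sqrt hfinal
      _ = Real.sqrt S.aA * ‖x‖ := by
          rw [Real.sqrt_mul haA, Real.sqrt_sq (norm_nonneg x)]
end

section
/- Let (A, M, H1) be a sparse approximation triple. For x ∈ M define the greedy sequence x⁰_{A,M} := 0 and x^{k+1}_{A,M} := x^k_{A,M} + argmin_{ẑ∈A} ‖x − x^k_{A,M} − ẑ‖_M for k ≥ 0 (a best approximator in A of the residual exists by proximinality). Then x^k_{A,M} converges to x in M: lim_{k→∞} ‖x^k_{A,M} − x‖_M = 0. -/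
/-- For a sparse approximation triple `(A, M, H1)` and `x ∈ M`, the greedy
sequence `x⁰ = 0`, `x^{k+1} = x^k + argmin_{ẑ ∈ A} ‖x − x^k − ẑ‖_M` converges to `x` in `M`. -/
theorem greedy_algorithm_converges
    {H1 : Type*} [NormedAddCommGroup H1] [InnerProductSpace ℝ H1] [CompleteSpace H1]
    {M : Type*} [NormedAddCommGroup M] [NormedSpace ℝ M] [CompleteSpace M]
    {I : Type*} (S : SparseApproxTriple H1 M I)
    (x : M) (g : ℕ → M) (hg0 : g 0 = 0)
    (hgrec : ∀ k : ℕ, IsBestApprox S.A (x - g k) (g (k + 1) - g k)) :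
    Filter.Tendsto g Filter.atTop (nhds x) := by
  classical
  set z : ℕ → M := fun k => g (k + 1) - g k with hz
  -- step: norm splitting along the greedy step
  have hstep : ∀ k, ‖x - g k‖ = ‖z k‖ + ‖x - g (k + 1)‖ := by
    intro k
    obtain ⟨hmem, hbestA⟩ := hgrec k
    obtain ⟨i, hzSi⟩ := Set.mem_iUnion.1 hmem
    have hbesti : ∀ w ∈ S.Asub i, ‖(x - g k) - z k‖ ≤ ‖(x - g k) - w‖ := fun w hw =>
      hbestA w (Set.mem_iUnion.2 ⟨i, hw⟩)
    have := S.norm_split_M i (x - g k) (z k) hzSi hbesti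
    have he : (x - g k) - z k = x - g (k + 1) := by simp [hz]
    rw [he] at this
    exact this
  -- partial sums of ‖z k‖ are bounded
  have hsum : ∀ n, ∑ k ∈ Finset.range n, ‖z k‖ = ‖x - g 0‖ - ‖x - g n‖ := by
    intro n
    induction n with
    | zero => simp
    | succ n ih =>
      rw [Finset.sum_range_succ, ih, hstep n]; ring
  have hsummable : Summable fun k => ‖z k‖ := by
    apply summable_of_sum_range_le (fun n => norm_nonneg _)
    intro n
    rw [hsum n]
    have := norm_nonneg (x - g n)
    linarith
  -- g is Cauchy, converges to l
  have hcauchy : CauchySeq g := by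
    apply cauchySeq_of_dist_le_of_summable (fun k => ‖z k‖) _ hsummable
    intro n
    rw [dist_eq_norm, norm_sub_rev]
  obtain ⟨l, hgl⟩ := cauchySeq_tendsto_of_complete hcauchy
  -- continuous version of j
  let J : M →L[ℝ] H1 := S.j.mkContinuous 1 (fun y => by simpa using S.j_norm_le y)
  have hJ : ∀ y : M, J y = S.j y := fun y => rfl
  have hz0 : Filter.Tendsto (fun k => ‖z k‖) Filter.atTop (nhds 0) :=
    hsummable.tendsto_atTop_zero
  -- key bound: for each a ∈ A, |⟪j (x - g k), j a⟫| ≤ ‖z k‖ * ‖j a‖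
  have hkey : ∀ a ∈ S.A, ∀ k, |@inner ℝ _ _ (S.j (x - g k)) (S.j a)| ≤ ‖z k‖ * ‖S.j a‖ := by
    intro a ha k
    obtain ⟨i, haSi⟩ := Set.mem_iUnion.1 ha
    -- best approximator of the residual in A_i
    obtain ⟨y, hy, hybest⟩ := S.prox (S.Asub i) ⟨0, (S.Asub i).zero_mem⟩
      (S.Asub_closed i) (x - g k)
    -- it is also a best approximator in H1
    have hH : ∀ w ∈ S.Asub i, ‖S.j (x - g k) - S.j y‖ ≤ ‖S.j (x - g k) - S.j w‖ :=
      S.common_best i (x - g k) y hy hybest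
    -- orthogonality
    set K : Submodule ℝ H1 := (S.Asub i).map S.j with hK
    have hjy : S.j y ∈ K := Submodule.mem_map_of_mem hy
    have hinf : ‖S.j (x - g k) - S.j y‖ = ⨅ w : (K : Set H1), ‖S.j (x - g k) - w‖ := by
      refine le_antisymm (le_ciInf ?_) (ciInf_le ⟨0, ?_⟩ (⟨S.j y, hjy⟩ : (K : Set H1)))
      · rintro ⟨w, hw⟩
        obtain ⟨w', hw', rfl⟩ := hw
        exact hH w' hw'
      · rintro r ⟨w, rfl⟩
        exact norm_nonneg _
    have horth := (Submodule.norm_eq_iInf_iff_real_inner_eq_zero K hjy).1 hinf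
    have hja : S.j a ∈ K := Submodule.mem_map_of_mem haSi
    have h0 : @inner ℝ _ _ (S.j (x - g k) - S.j y) (S.j a) = 0 := horth _ hja
    have heq : @inner ℝ _ _ (S.j (x - g k)) (S.j a) = @inner ℝ _ _ (S.j y) (S.j a) := by
      have := inner_sub_left (𝕜 := ℝ) (S.j (x - g k)) (S.j y) (S.j a)
      rw [h0] at this
      linarith [this]
    -- ‖y‖ ≤ ‖z k‖
    have hyz : ‖y‖ ≤ ‖z k‖ := by
      have h1 := S.norm_split_M i (x - g k) y hy hybest
      have h2 : ‖(x - g k) - z k‖ ≤ ‖(x - g k) - y‖ :=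
        (hgrec k).2 y (Set.mem_iUnion.2 ⟨i, hy⟩)
      have he : (x - g k) - z k = x - g (k + 1) := by simp [hz]
      rw [he] at h2
      have h3 := hstep k
      linarith
    calc |@inner ℝ _ _ (S.j (x - g k)) (S.j a)| = |@inner ℝ _ _ (S.j y) (S.j a)| := by rw [heq]
      _ ≤ ‖S.j y‖ * ‖S.j a‖ := abs_real_inner_le_norm _ _
      _ ≤ ‖y‖ * ‖S.j a‖ := by
          exact mul_le_mul_of_nonneg_right (S.j_norm_le y) (norm_nonneg _)
      _ ≤ ‖z k‖ * ‖S.j a‖ := mul_le_mul_of_nonneg_right hyz (norm_nonneg _)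
  -- limit: j (x - l) ⊥ j a for all a ∈ A
  have horthA : ∀ a ∈ S.A, @inner ℝ _ _ (S.j (x - l)) (S.j a) = 0 := by
    intro a ha
    have htend : Filter.Tendsto (fun k => @inner ℝ _ _ (S.j (x - g k)) (S.j a))
        Filter.atTop (nhds (@inner ℝ _ _ (S.j (x - l)) (S.j a))) := by
      have h1 : Filter.Tendsto (fun k => x - g k) Filter.atTop (nhds (x - l)) :=
        tendsto_const_nhds.sub hgl
      have h2 : Filter.Tendsto (fun k => J (x - g k)) Filter.atTop (nhds (J (x - l))) :=
        (J.continuous.tendsto _).comp h1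
      simp only [hJ] at h2
      exact ((continuous_inner.comp (Continuous.prodMk continuous_id continuous_const)).tendsto
        (S.j (x - l))).comp h2
    have htend0 : Filter.Tendsto (fun k => @inner ℝ _ _ (S.j (x - g k)) (S.j a))
        Filter.atTop (nhds 0) := by
      refine squeeze_zero_norm (a := fun k => ‖z k‖ * ‖S.j a‖) (fun k => ?_) ?_
      · simpa using hkey a ha k
      · simpa using hz0.mul_const ‖S.j a‖
    exact tendsto_nhds_unique htend htend0
  -- j (x - l) is orthogonal to a dense set, hence zero
  have hC : {u : H1 | @inner ℝ _ _ (S.j (x - l)) u = 0} = Set.univ := by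
    apply Set.eq_univ_of_univ_subset
    have hclosed : IsClosed {u : H1 | @inner ℝ _ _ (S.j (x - l)) u = 0} :=
      isClosed_eq (continuous_const.inner continuous_id) continuous_const
    have hsub : (⋃ k : ℕ, {u : H1 | ∃ f : Fin (k + 1) → M,
        (∀ n, f n ∈ ⋃ i : I, (S.Asub i : Set M)) ∧ u = ∑ n, S.j (f n)}) ⊆
        {u : H1 | @inner ℝ _ _ (S.j (x - l)) u = 0} := by
      rintro u hu
      obtain ⟨k, f, hf, rfl⟩ := Set.mem_iUnion.1 hu
      simp only [Set.mem_setOf_eq]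
      rw [inner_sum]
      exact Finset.sum_eq_zero fun n _ => horthA (f n) (hf n)
    calc (Set.univ : Set H1) = closure (⋃ k : ℕ, {u : H1 | ∃ f : Fin (k + 1) → M,
          (∀ n, f n ∈ ⋃ i : I, (S.Asub i : Set M)) ∧ u = ∑ n, S.j (f n)}) :=
            (S.sparse_dense.closure_eq).symm
      _ ⊆ closure {u : H1 | @inner ℝ _ _ (S.j (x - l)) u = 0} := closure_mono hsub
      _ = _ := hclosed.closure_eq
  have hjr : S.j (x - l) = 0 := by
    have h0 : S.j (x - l) ∈ {u : H1 | @inner ℝ _ _ (S.j (x - l)) u = 0} :=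
      hC.symm ▸ Set.mem_univ _
    exact inner_self_eq_zero.1 h0
  have hxl : x = l := by
    have h0 : x - l = 0 := S.j_inj (by simp [hjr])
    exact sub_eq_zero.1 h0
  rw [hxl]
  exact hgl
end
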